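/- arXiv:2109.05965 — 6 statements merged into one kernel-verified Lean document; each statement's English description precedes it below -/
import Mathlib

section
/- Let $\Psi \in \mathbb{F}_p^{r \times (M+1)}$ be a translation-invariant system of linear forms whose matrix has first column equal to the all-ones vector, and let $Z = \{a_1, \ldots, a_r\} \subset \mathbb{F}_p^M$ be the associated set (where $a_i$ is the row $\psi_i$ restricted to its last $M$ coordinates). Then $\Psi$ has Cauchy-Schwarz complexity at most $k$ at $i$ if and only if $Z \setminus \{a_i\}$ can be covered by $k+1$ affine subspaces of $\mathbb{F}_p^M$, each of which excludes $a_i$. -/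
private lemma sum_cons_one {F : Type*} [CommRing F] {M : ℕ} {ι : Type*} (fs : Finset ι)
    (w : ι → F) (g : ι → (Fin M → F)) :
    ∑ j ∈ fs, w j • (Fin.cons (1 : F) (g j) : Fin (M + 1) → F) =
      (Fin.cons (∑ j ∈ fs, w j) (∑ j ∈ fs, w j • g j) : Fin (M + 1) → F) := by
  funext m
  induction m using Fin.cases with
  | zero => simp [Finset.sum_apply]
  | succ m => simp [Finset.sum_apply]

private lemma cons_mem_span_iff (p : ℕ) [Fact p.Prime] {M : ℕ}
    (s : Set (Fin M → ZMod p)) (x : Fin M → ZMod p) :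
    (Fin.cons 1 x : Fin (M + 1) → ZMod p) ∈
        Submodule.span (ZMod p) ((fun y => (Fin.cons 1 y : Fin (M + 1) → ZMod p)) '' s) ↔
      x ∈ affineSpan (ZMod p) s := by
  constructor
  · intro h
    rw [Submodule.mem_span_set'] at h
    obtain ⟨n, f, g, hg⟩ := h
    choose y hys hy using fun i => (g i).2
    have hg' : ∑ i, f i • (Fin.cons 1 (y i) : Fin (M + 1) → ZMod p) = (Fin.cons 1 x : Fin (M + 1) → ZMod p) := by
      rw [← hg]
      exact Finset.sum_congr rfl fun i _ => by rw [← hy i]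
    rw [sum_cons_one] at hg'
    have hsum : ∑ i, f i = 1 := by
      have := congrFun hg' 0
      simpa using this
    have hx : ∑ i, f i • y i = x := by
      funext m
      have := congrFun hg' m.succ
      simpa [Finset.sum_apply] using this
    have hmem : Finset.univ.affineCombination (ZMod p) y f ∈
        affineSpan (ZMod p) (Set.range y) :=
      affineCombination_mem_affineSpan hsum y
    rw [Finset.affineCombination_eq_linear_combination _ _ _ hsum, hx] at hmem
    exact affineSpan_mono (ZMod p) (Set.range_subset_iff.mpr hys) hmem
  · intro h
    rw [← Subtype.range_coe (s := s)] at h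
    obtain ⟨fs, w, hw, hx⟩ := eq_affineCombination_of_mem_affineSpan h
    rw [Finset.affineCombination_eq_linear_combination _ _ _ hw] at hx
    have : (Fin.cons 1 x : Fin (M + 1) → ZMod p) = ∑ j ∈ fs, w j • (Fin.cons 1 (j : Fin M → ZMod p) : Fin (M + 1) → ZMod p) := by
      rw [sum_cons_one, hw, hx]
    rw [this]
    exact Submodule.sum_smul_mem _ _ fun j _ =>
      Submodule.subset_span ⟨(j : Fin M → ZMod p), j.2, rfl⟩

theorem stmt_2 (p : ℕ) (hp : p.Prime) (r M k : ℕ)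
    (Ψ : Fin r → (Fin (M + 1) → ZMod p))
    (hones : ∀ i, Ψ i 0 = 1)
    (hinj : Function.Injective Ψ)
    (a : Fin r → (Fin M → ZMod p))
    (ha : ∀ i m, a i m = Ψ i m.succ)
    (i : Fin r) :
    (∃ C : Fin (k + 1) → Set (Fin (M + 1) → ZMod p),
      (∀ t, C t ⊆ Ψ '' {j | j ≠ i}) ∧
      (∀ j, j ≠ i → ∃ t, Ψ j ∈ C t) ∧
      (∀ t, Ψ i ∉ Submodule.span (ZMod p) (C t)))
    ↔ (∃ W : Fin (k + 1) → AffineSubspace (ZMod p) (Fin M → ZMod p),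
      (∀ j, j ≠ i → ∃ t, a j ∈ W t) ∧
      (∀ t, a i ∉ W t)) := by
  haveI := Fact.mk hp
  have hΨ : ∀ j, Ψ j = Fin.cons 1 (a j) := by
    intro j
    funext m
    induction m using Fin.cases with
    | zero => simp [hones]
    | succ m => simp [ha]
  have htail : ∀ j, Fin.tail (Ψ j) = a j := by
    intro j; funext m; simp [Fin.tail, ha]
  constructor
  · rintro ⟨C, hC1, hC2, hC3⟩
    refine ⟨fun t => affineSpan (ZMod p) (Fin.tail '' C t), ?_, ?_⟩
    · intro j hj
      obtain ⟨t, ht⟩ := hC2 j hj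
      exact ⟨t, subset_affineSpan _ _ ⟨Ψ j, ht, htail j⟩⟩
    · intro t hmem
      apply hC3 t
      have hCt : Fin.cons (1 : ZMod p) '' (Fin.tail '' C t) = C t := by
        ext v
        constructor
        · rintro ⟨_, ⟨u, hu, rfl⟩, rfl⟩
          obtain ⟨j, hj, rfl⟩ := hC1 t hu
          rwa [show Fin.cons (1 : ZMod p) (Fin.tail (Ψ j)) = Ψ j by
            rw [← hones j]; exact Fin.cons_self_tail _]
        · intro hv
          obtain ⟨j, hj, rfl⟩ := hC1 t hv
          exact ⟨Fin.tail (Ψ j), ⟨Ψ j, hv, rfl⟩, by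
            rw [← hones j]; exact Fin.cons_self_tail _⟩
      have := (cons_mem_span_iff p (Fin.tail '' C t) (a i)).mpr hmem
      rw [hCt] at this
      rwa [hΨ i]
  · rintro ⟨W, hW1, hW2⟩
    refine ⟨fun t => Fin.cons 1 '' {x | x ∈ (W t : Set (Fin M → ZMod p)) ∧
      ∃ j, j ≠ i ∧ a j = x}, ?_, ?_, ?_⟩
    · rintro t v ⟨x, ⟨hxW, j, hj, rfl⟩, rfl⟩
      exact ⟨j, hj, hΨ j⟩
    · intro j hj
      obtain ⟨t, ht⟩ := hW1 j hj
      exact ⟨t, a j, ⟨ht, j, hj, rfl⟩, (hΨ j).symm⟩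
    · intro t hmem
      apply hW2 t
      rw [hΨ i] at hmem
      have := (cons_mem_span_iff p _ (a i)).mp hmem
      exact affineSpan_le.mpr (fun x hx => hx.1) this
end

section
/- Let $p$ be a prime and let $M, k$ be positive integers. Let $S_{k,M} = \{z \in [0,p-1]^M : z_1 + \cdots + z_M < k\}$, viewed as a subset of $\mathbb{F}_p^M$. Then there exists a sequence $a^{(1)}, \ldots, a^{(|S_{k,M}|)}$ enumerating $S_{k,M}$ without repetition, with $a^{(|S_{k,M}|)} = (0, \ldots, 0)$, such that for all $i \in [\,|S_{k,M}|\,]$, the set $S_{k,M} \setminus \{a^{(1)}, \ldots, a^{(i)}\}$ can be covered by at most $k-1$ affine subspaces of $\mathbb{F}_p^M$, each of which contains none of the points $a^{(1)}, \ldots, a^{(i)}$. -/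
open Finset

namespace Stmt4Aux

variable {p M : ℕ}

/-- The colex key of a point: base-`p` number with coordinate `j` as digit `j`. -/
def key (z : Fin M → ZMod p) : ℕ := ∑ j : Fin M, (z j).val * p ^ (j : ℕ)

/-- The `t`-th digit of a point. -/
def dig (z : Fin M → ZMod p) (t : ℕ) : ℕ := if h : t < M then (z ⟨t, h⟩).val else 0

lemma sum_digits_lt (hp : 0 < p) (f : ℕ → ℕ) (hf : ∀ t, f t < p) (m : ℕ) :
    ∑ t ∈ Finset.range m, f t * p ^ t < p ^ m := by
  induction m with
  | zero => simpa using Nat.one_pos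
  | succ m ih =>
    rw [Finset.sum_range_succ, pow_succ]
    have h1 : f m + 1 ≤ p := hf m
    have h2 : (f m + 1) * p ^ m ≤ p ^ m * p := by
      rw [mul_comm (p ^ m) p]; exact Nat.mul_le_mul_right _ h1
    nlinarith

lemma key_eq_range [NeZero p] (z : Fin M → ZMod p) :
    key z = ∑ t ∈ Finset.range M, dig z t * p ^ t := by
  rw [key, ← Fin.sum_univ_eq_sum_range (fun t => dig z t * p ^ t) M]
  refine Finset.sum_congr rfl fun j _ => ?_
  rw [dig, dif_pos j.isLt]

lemma key_strict [NeZero p] (z w : Fin M → ZMod p) (m : Fin M)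
    (hj : ∀ j, m < j → z j = w j) (hm : (z m).val < (w m).val) :
    key z < key w := by
  have hp : 0 < p := Nat.pos_of_ne_zero (NeZero.ne p)
  rw [key_eq_range, key_eq_range]
  have hfb : ∀ t, dig z t < p := by
    intro t; rw [dig]; split
    · exact ZMod.val_lt _
    · exact hp
  have hm1 : (m : ℕ) + 1 ≤ M := m.isLt
  rw [Finset.range_eq_Ico, ← Finset.sum_Ico_consecutive _ (Nat.zero_le ((m : ℕ) + 1)) hm1,
    ← Finset.sum_Ico_consecutive _ (Nat.zero_le ((m : ℕ) + 1)) hm1]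
  have htail : ∑ t ∈ Finset.Ico ((m : ℕ) + 1) M, dig z t * p ^ t
      = ∑ t ∈ Finset.Ico ((m : ℕ) + 1) M, dig w t * p ^ t := by
    refine Finset.sum_congr rfl fun t ht => ?_
    obtain ⟨ht1, ht2⟩ := Finset.mem_Ico.mp ht
    simp only [dig, dif_pos ht2]
    rw [hj ⟨t, ht2⟩ (by exact Nat.lt_of_succ_le ht1)]
  have hhead : ∑ t ∈ Finset.Ico 0 ((m : ℕ) + 1), dig z t * p ^ t
      < ∑ t ∈ Finset.Ico 0 ((m : ℕ) + 1), dig w t * p ^ t := by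
    rw [← Finset.range_eq_Ico, Finset.sum_range_succ, Finset.sum_range_succ]
    have hsmall : ∑ t ∈ Finset.range (m : ℕ), dig z t * p ^ t < p ^ (m : ℕ) :=
      sum_digits_lt hp (dig z) hfb m
    have hfm : dig z (m : ℕ) = (z m).val := by simp [dig]
    have hgm : dig w (m : ℕ) = (w m).val := by simp [dig]
    have h1 : (dig z (m : ℕ) + 1) * p ^ (m : ℕ) ≤ dig w (m : ℕ) * p ^ (m : ℕ) := by
      apply Nat.mul_le_mul_right
      omega
    calc ∑ t ∈ Finset.range (m : ℕ), dig z t * p ^ t + dig z (m : ℕ) * p ^ (m : ℕ)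
        < p ^ (m : ℕ) + dig z (m : ℕ) * p ^ (m : ℕ) := by omega
      _ = (dig z (m : ℕ) + 1) * p ^ (m : ℕ) := by ring
      _ ≤ dig w (m : ℕ) * p ^ (m : ℕ) := h1
      _ ≤ ∑ t ∈ Finset.range (m : ℕ), dig w t * p ^ t + dig w (m : ℕ) * p ^ (m : ℕ) := by omega
  omega

lemma max_diff (z w : Fin M → ZMod p) (h : z ≠ w) :
    ∃ m : Fin M, z m ≠ w m ∧ ∀ j, m < j → z j = w j := by
  classical
  set D := Finset.univ.filter (fun j : Fin M => z j ≠ w j) with hD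
  have hDne : D.Nonempty := by
    obtain ⟨j, hj⟩ := Function.ne_iff.mp h
    exact ⟨j, by simp [hD, hj]⟩
  refine ⟨D.max' hDne, (Finset.mem_filter.mp (D.max'_mem hDne)).2, fun j hj => ?_⟩
  by_contra hne
  exact absurd hj (not_lt.mpr (D.le_max' j (by simp [hD, hne])))

lemma key_injective [NeZero p] : Function.Injective (key : (Fin M → ZMod p) → ℕ) := by
  intro z w h
  by_contra hne
  obtain ⟨m, hm, htail⟩ := max_diff z w hne
  rcases lt_trichotomy ((z m).val) ((w m).val) with h1 | h1 | h1
  · exact absurd h (Nat.ne_of_lt (key_strict z w m htail h1))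
  · exact hm (ZMod.val_injective p h1)
  · exact absurd h.symm (Nat.ne_of_lt (key_strict w z m (fun j hj => (htail j hj).symm) h1))

lemma exists_digit_lt [NeZero p] (z w : Fin M → ZMod p) (h : key z < key w) :
    ∃ m : Fin M, (z m).val < (w m).val ∧ ∀ j, m < j → z j = w j := by
  have hne : z ≠ w := fun he => by subst he; exact lt_irrefl _ h
  obtain ⟨m, hm, htail⟩ := max_diff z w hne
  rcases lt_or_ge ((z m).val) ((w m).val) with h1 | h1
  · exact ⟨m, h1, htail⟩
  · exfalso
    have h2 : (w m).val < (z m).val :=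
      lt_of_le_of_ne h1 (fun he => hm (ZMod.val_injective p he.symm))
    exact absurd h (not_lt.mpr (le_of_lt (key_strict w z m (fun j hj => (htail j hj).symm) h2)))

/-- The affine subspace of points agreeing with `a` above coordinate `m` and
having value `c` at coordinate `m`. -/
def V (a : Fin M → ZMod p) (m : Fin M) (c : ZMod p) :
    AffineSubspace (ZMod p) (Fin M → ZMod p) where
  carrier := {z | z m = c ∧ ∀ j, m < j → z j = a j}
  smul_vsub_vadd_mem' := by
    rintro t z1 z2 z3 ⟨h1, h1'⟩ ⟨h2, h2'⟩ ⟨h3, h3'⟩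
    constructor
    · show t • (z1 m - z2 m) + z3 m = c
      rw [h1, h2, h3]; simp
    · intro j hj
      show t • (z1 j - z2 j) + z3 j = _
      rw [h1' j hj, h2' j hj, h3' j hj]; simp

lemma mem_V_iff (a : Fin M → ZMod p) (m : Fin M) (c : ZMod p) (z : Fin M → ZMod p) :
    z ∈ V a m c ↔ z m = c ∧ ∀ j, m < j → z j = a j := Iff.rfl

end Stmt4Aux

open Stmt4Aux

theorem stmt_4 (p M k : ℕ) [Fact p.Prime] (hM : 0 < M) (hk : 1 ≤ k)
    (s : Finset (Fin M → ZMod p))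
    (hs : s = Finset.univ.filter (fun z => ∑ j, (z j).val < k)) :
    ∃ a : Fin s.card → (Fin M → ZMod p),
      Function.Injective a ∧
      Set.range a = ↑s ∧
      a ⟨s.card - 1, by
        have h0 : (fun _ => 0 : Fin M → ZMod p) ∈ s := by
          rw [hs]
          simpa using (show 0 < k by omega)
        have := Finset.card_pos.mpr ⟨_, h0⟩
        omega⟩ = (fun _ => 0) ∧
      (∀ i : Fin s.card,
        ∃ W : Fin (k - 1) → AffineSubspace (ZMod p) (Fin M → ZMod p),
          (∀ z ∈ s, (∀ j, j ≤ i → z ≠ a j) → ∃ t, z ∈ W t) ∧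
          (∀ t, ∀ j, j ≤ i → a j ∉ W t)) := by
  classical
  haveI : NeZero p := ⟨(Fact.out : p.Prime).ne_zero⟩
  have h0 : (fun _ => 0 : Fin M → ZMod p) ∈ s := by
    rw [hs]; simpa using (show 0 < k by omega)
  have hn : 0 < s.card := Finset.card_pos.mpr ⟨_, h0⟩
  letI : LinearOrder (Fin M → ZMod p) := LinearOrder.lift' key key_injective
  have hle : ∀ z w : Fin M → ZMod p, z ≤ w ↔ key z ≤ key w := fun _ _ => Iff.rfl
  have hlt : ∀ z w : Fin M → ZMod p, z < w ↔ key z < key w := by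
    intro z w
    rw [lt_iff_le_not_ge, lt_iff_le_not_ge, hle, hle]
  let e := s.orderIsoOfFin rfl
  let a : Fin s.card → (Fin M → ZMod p) := fun i => ((e i.rev : s) : Fin M → ZMod p)
  have ha : ∀ i : Fin s.card, a i = ((e i.rev : s) : Fin M → ZMod p) := fun _ => rfl
  -- a is strictly key-antitone
  have hanti : ∀ i j : Fin s.card, i < j → key (a j) < key (a i) := by
    intro i j hij
    have h1 : j.rev < i.rev := Fin.rev_lt_rev.mpr hij
    have h2 := e.strictMono h1
    rw [ha, ha, ← hlt]
    exact h2
  have hantile : ∀ i j : Fin s.card, i ≤ j → key (a j) ≤ key (a i) := by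
    intro i j hij
    rcases eq_or_lt_of_le hij with h | h
    · subst h; exact le_rfl
    · exact le_of_lt (hanti i j h)
  have hmem : ∀ i, a i ∈ s := fun i => (e i.rev).2
  have hinj : Function.Injective a := by
    intro i j h
    have := e.injective (Subtype.ext h)
    exact Fin.rev_injective this
  have hrange : Set.range a = ↑s := by
    apply Set.eq_of_subset_of_subset
    · rintro x ⟨i, rfl⟩; exact hmem i
    · intro z hz
      refine ⟨(e.symm ⟨z, hz⟩).rev, ?_⟩
      rw [ha, Fin.rev_rev, e.apply_symm_apply]
  refine ⟨a, hinj, hrange, ?_, ?_⟩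
  · -- last element is zero
    set z0 : Fin M → ZMod p := fun _ => 0 with hz0
    have hkey0 : key z0 = 0 := by simp [key, hz0]
    have hrev0 : (⟨s.card - 1, by omega⟩ : Fin s.card).rev = ⟨0, hn⟩ := by
      apply Fin.ext
      rw [Fin.val_rev]
      show s.card - (s.card - 1 + 1) = 0
      omega
    rw [ha, hrev0]
    -- e ⟨0, hn⟩ is the minimum of s
    have h1 : (⟨0, hn⟩ : Fin s.card) ≤ e.symm ⟨z0, h0⟩ := Fin.mk_le_mk.mpr (Nat.zero_le _)
    have h2 := e.monotone h1
    rw [e.apply_symm_apply] at h2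
    have h3 : key ((e ⟨0, hn⟩ : s) : Fin M → ZMod p) ≤ key z0 := h2
    apply key_injective
    rw [hkey0]
    omega
  · intro i
    set A : Fin M → ZMod p := a i with hA
    have hAs : ∑ j, (A j).val < k := by
      have := hmem i
      rw [hs, Finset.mem_filter] at this
      exact this.2
    -- pairs indexing the covering subspaces
    have hcard : Fintype.card (Σ m : Fin M, Fin ((A m).val)) ≤ k - 1 := by
      rw [Fintype.card_sigma]
      simp only [Fintype.card_fin]
      omega
    obtain ⟨g⟩ : Nonempty ((Σ m : Fin M, Fin ((A m).val)) ↪ Fin (k - 1)) := by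
      apply Function.Embedding.nonempty_of_card_le
      rwa [Fintype.card_fin]
    let Wf : (Σ m : Fin M, Fin ((A m).val)) → AffineSubspace (ZMod p) (Fin M → ZMod p) :=
      fun pr => V A pr.1 (((pr.2 : ℕ) : ZMod p))
    refine ⟨Function.extend g Wf (fun _ => ⊥), ?_, ?_⟩
    · intro z hz hzne
      obtain ⟨j', hj'⟩ : ∃ j', a j' = z := by
        have : z ∈ Set.range a := hrange ▸ hz
        exact this
      have hij : i < j' := by
        rcases lt_or_ge i j' with h | h
        · exact h
        · exact absurd hj'.symm (hzne j' h)
      have hklt : key z < key A := hj' ▸ hanti i j' hij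
      obtain ⟨m, hm, htail⟩ := exists_digit_lt z A hklt
      refine ⟨g ⟨m, ⟨(z m).val, hm⟩⟩, ?_⟩
      rw [g.injective.extend_apply]
      rw [mem_V_iff]
      exact ⟨by simp [ZMod.natCast_zmod_val], htail⟩
    · intro t j hji hmem'
      have hkge : key A ≤ key (a j) := hantile j i hji
      rcases em (∃ pr, g pr = t) with ⟨pr, rfl⟩ | ht
      · rw [g.injective.extend_apply] at hmem'
        rw [mem_V_iff] at hmem'
        obtain ⟨h1, h2⟩ := hmem'
        have hvlt : ((a j) pr.1).val < (A pr.1).val := by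
          rw [h1, ZMod.val_cast_of_lt (lt_trans pr.2.isLt (ZMod.val_lt _))]
          exact pr.2.isLt
        have := key_strict (a j) A pr.1 h2 hvlt
        omega
      · rw [Function.extend_apply' _ _ _ ht] at hmem'
        rw [← AffineSubspace.mem_coe, AffineSubspace.bot_coe] at hmem'
        exact Set.notMem_empty _ hmem'
end

section
/- For every prime $p \geq 5$ and every integer $M \geq 2$, any collection of affine hyperplanes in $\mathbb{F}_p^M$, none of which contains the origin, whose union covers $S_{p+1,M} \setminus \{0^M\}$, must contain at least $p+1$ hyperplanes. Here $S_{p+1,M} = \{z \in [0,p-1]^M : z_1 + \cdots + z_M \leq p\}$ (sum in $\mathbb{Z}$), identified with a subset of $\mathbb{F}_p^M$. -/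
open Finset

namespace Stmt6
variable (p : ℕ) [Fact p.Prime]

-- sum of vals over ZMod p
lemma sum_val : (∑ x : ZMod p, x.val) * 2 = p * (p-1) := by
  have hp : 0 < p := (Fact.out : p.Prime).pos
  have : ∑ x : ZMod p, x.val = ∑ i ∈ range p, i := by
    apply Finset.sum_nbij (fun x => x.val)
    · intro a _; exact mem_range.2 (ZMod.val_lt a)
    · intro a _ b _ h; exact ZMod.val_injective p h
    · intro i hi
      simp only [Set.mem_image]
      refine ⟨(i : ZMod p), ?_, ?_⟩
      · simp
      · exact ZMod.val_cast_of_lt (mem_range.1 (by simpa using hi))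
    · intro a _; rfl
  rw [this, Finset.sum_range_id_mul_two]

-- val of neg
lemma val_neg' {a : ZMod p} (h : a ≠ 0) : (-a).val = p - a.val := by
  haveI : NeZero a := ⟨h⟩
  exact ZMod.val_neg_of_ne_zero a

lemma val_pos {a : ZMod p} (h : a ≠ 0) : 0 < a.val := by
  rcases Nat.eq_zero_or_pos a.val with h0 | h0
  · exact absurd ((ZMod.val_eq_zero a).1 h0) h
  · exact h0

-- key decomposition: for a b : ZMod p, b.val + (a-b).val = a.val + (if a.val < b.val then p else 0)
lemma val_sub_key (a b : ZMod p) :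
    b.val + (a - b).val = a.val + (if a.val < b.val then p else 0) := by
  rcases le_or_gt b.val a.val with h | h
  · rw [ZMod.val_sub h, if_neg (not_lt.2 h)]; omega
  · rw [if_pos h]
    have hb0 : b ≠ 0 := by
      intro hb; rw [hb] at h; simp [ZMod.val_zero] at h
    have hne : a - b ≠ 0 := by
      intro hab
      have : a = b := by rwa [sub_eq_zero] at hab
      rw [this] at h; omega
    have h1 : (a - b) + b = a := by ring
    have h2 : ((a-b) + b).val = ((a-b).val + b.val) % p := ZMod.val_add _ _
    rw [h1] at h2
    have hlt1 : (a-b).val < p := ZMod.val_lt _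
    have hlt2 : b.val < p := ZMod.val_lt _
    have hpos : 0 < (a-b).val := val_pos p hne
    -- (a-b).val + b.val ∈ [1, 2p-2], ≡ a.val, a.val < b.val ⟹ must be a.val + p
    rcases Nat.lt_or_ge ((a-b).val + b.val) p with hc | hc
    · rw [Nat.mod_eq_of_lt hc] at h2; omega
    · have : (a-b).val + b.val - p < p := by omega
      have h3 : ((a-b).val + b.val) % p = (a-b).val + b.val - p := by
        rw [Nat.mod_eq_sub_mod hc, Nat.mod_eq_of_lt this]
      omega

-- Claim B : count of x with (g x).val > x.val
lemma claimB (lam mu : ZMod p) (h0 : lam ≠ 0) (h1 : lam ≠ 1) :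
    (univ.filter (fun x : ZMod p => x.val < (lam * x + mu).val)).card * 2 = p - 1 := by
  have hp : 0 < p := (Fact.out : p.Prime).pos
  set g : ZMod p → ZMod p := fun x => lam * x + mu with hg
  set d : ZMod p → ZMod p := fun x => x - g x with hd
  -- pointwise: (g x).val + (d x).val = x.val + ite
  have key : ∀ x : ZMod p, (g x).val + (d x).val = x.val + (if x.val < (g x).val then p else 0) := by
    intro x; exact val_sub_key p x (g x)
  have hsum : ∑ x : ZMod p, ((g x).val + (d x).val)
      = (∑ x : ZMod p, x.val) + (univ.filter (fun x : ZMod p => x.val < (g x).val)).card * p := by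
    rw [Finset.sum_congr rfl (fun x _ => key x), Finset.sum_add_distrib]
    congr 1
    rw [Finset.sum_ite, Finset.sum_const, Finset.sum_const_zero, add_zero, smul_eq_mul]
  have hbij_g : Function.Bijective g := by
    have : Function.Injective g := by
      intro x y hxy
      simp only [hg] at hxy
      have := sub_eq_zero.2 hxy
      have h2 : lam * (x - y) = 0 := by ring_nf; ring_nf at this; linear_combination this
      rcases mul_eq_zero.1 h2 with h | h
      · exact absurd h h0
      · exact sub_eq_zero.1 h
    exact Finite.injective_iff_bijective.1 this
  have hbij_d : Function.Bijective d := by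
    have : Function.Injective d := by
      intro x y hxy
      simp only [hd, hg] at hxy
      have h2 : (1 - lam) * (x - y) = 0 := by linear_combination hxy
      rcases mul_eq_zero.1 h2 with h | h
      · have : lam = 1 := by linear_combination -h
        exact absurd this h1
      · exact sub_eq_zero.1 h
    exact Finite.injective_iff_bijective.1 this
  have hg_sum : ∑ x : ZMod p, (g x).val = ∑ x : ZMod p, x.val :=
    Finset.sum_bijective g hbij_g (by simp) (fun i _ => rfl)
  have hd_sum : ∑ x : ZMod p, (d x).val = ∑ x : ZMod p, x.val :=
    Finset.sum_bijective d hbij_d (by simp) (fun i _ => rfl)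
  rw [Finset.sum_add_distrib, hg_sum, hd_sum] at hsum
  -- so sum_val = card * p
  have hcard : (univ.filter (fun x : ZMod p => x.val < (g x).val)).card * p = ∑ x : ZMod p, x.val := by omega
  have := sum_val p
  -- card * p * 2 = p * (p-1)
  have h2 : (univ.filter (fun x : ZMod p => x.val < (g x).val)).card * 2 * p = (p-1) * p := by
    calc (univ.filter (fun x : ZMod p => x.val < (g x).val)).card * 2 * p
        = ((univ.filter (fun x : ZMod p => x.val < (g x).val)).card * p) * 2 := by ring
      _ = (∑ x : ZMod p, x.val) * 2 := by rw [hcard]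
      _ = p * (p-1) := this
      _ = (p-1) * p := by ring
  exact Nat.eq_of_mul_eq_mul_right hp h2


-- ============ the triangle set ============
def cov (c z : ZMod p × ZMod p) : Prop := c.1 * z.1 + c.2 * z.2 = 1

instance (c z : ZMod p × ZMod p) : Decidable (cov p c z) := by unfold cov; infer_instance

def TT : Finset (ZMod p × ZMod p) :=
  univ.filter (fun z => z.1.val + z.2.val ≤ p ∧ z ≠ 0)

lemma mem_TT {z : ZMod p × ZMod p} : z ∈ TT p ↔ z.1.val + z.2.val ≤ p ∧ z ≠ 0 := by
  simp [TT]


lemma one_lt_p' : 1 < p := (Fact.out : p.Prime).one_lt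

def TT0 : Finset (ZMod p × ZMod p) := univ.filter (fun z => z.1.val + z.2.val ≤ p)

lemma card_TT0_fiber (x : ZMod p) :
    ((TT0 p).filter (fun z => z.1 = x)).card
      = (univ.filter (fun y : ZMod p => x.val + y.val ≤ p)).card := by
  apply Finset.card_nbij (fun z => z.2)
  · intro z hz
    simp only [TT0, mem_coe, mem_filter, mem_univ, true_and] at hz ⊢
    rcases hz with ⟨h1, h2⟩
    rw [← h2]; exact h1
  · intro a ha b hb hab
    simp only [coe_filter, Set.mem_setOf_eq] at ha hb
    rcases ha with ⟨-, ha2⟩; rcases hb with ⟨-, hb2⟩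
    exact Prod.ext (ha2.trans hb2.symm) hab
  · intro y hy
    simp only [coe_filter, Set.mem_setOf_eq, mem_univ, true_and] at hy
    have hm : (x, y) ∈ (TT0 p).filter (fun z => z.1 = x) := by
      simp only [TT0, mem_filter, mem_univ, true_and]
      exact ⟨hy, trivial⟩
    exact ⟨(x, y), by simpa using hm, rfl⟩

lemma card_vle {m : ℕ} (hm : m < p) :
    (univ.filter (fun y : ZMod p => y.val ≤ m)).card = m + 1 := by
  rw [show m + 1 = (range (m+1)).card from (card_range _).symm]
  apply Finset.card_nbij (fun y => y.val)
  · intro y hy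
    simp only [mem_coe, mem_filter, mem_univ, true_and] at hy
    exact mem_range.2 (by dsimp only; omega)
  · intro a _ b _ hab; exact ZMod.val_injective p hab
  · intro i hi
    simp only [mem_coe, mem_range] at hi
    refine ⟨(i : ZMod p), ?_, ZMod.val_cast_of_lt (by omega)⟩
    simp only [coe_filter, Set.mem_setOf_eq, mem_univ, true_and]
    rw [ZMod.val_cast_of_lt (by omega)]; omega

lemma card_TT0 : 2 * (TT0 p).card + 2 = p * p + 3 * p := by
  have hp : 1 < p := one_lt_p' p
  have hfib : (TT0 p).card = ∑ x : ZMod p, ((TT0 p).filter (fun z => z.1 = x)).card :=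
    Finset.card_eq_sum_card_fiberwise (fun z _ => mem_univ z.1)
  have hinner : ∀ x : ZMod p, ((TT0 p).filter (fun z => z.1 = x)).card
      = if x = 0 then p else p + 1 - x.val := by
    intro x
    rw [card_TT0_fiber]
    by_cases hx : x = 0
    · subst hx
      rw [if_pos rfl]
      have : (univ.filter (fun y : ZMod p => (0:ZMod p).val + y.val ≤ p)) = univ := by
        apply Finset.filter_true_of_mem
        intro y _
        rw [ZMod.val_zero]
        have := ZMod.val_lt y; omega
      rw [this, Finset.card_univ, ZMod.card]
    · rw [if_neg hx]
      have hv : 0 < x.val := val_pos p hx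
      have hv2 : x.val < p := ZMod.val_lt x
      have : (univ.filter (fun y : ZMod p => x.val + y.val ≤ p))
          = (univ.filter (fun y : ZMod p => y.val ≤ p - x.val)) := by
        apply Finset.filter_congr
        intro y _; constructor <;> intro h <;> omega
      rw [this, card_vle p (by omega)]
      omega
  rw [hfib, Finset.sum_congr rfl (fun x _ => hinner x)]
  rw [← Finset.sum_erase_add univ _ (mem_univ (0 : ZMod p)), if_pos rfl]
  have hcong : ∑ x ∈ univ.erase (0 : ZMod p), (if x = 0 then p else p + 1 - x.val)
      = ∑ x ∈ univ.erase (0 : ZMod p), (p + 1 - x.val) := by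
    apply Finset.sum_congr rfl
    intro x hx
    rw [if_neg (Finset.mem_erase.1 hx).1]
  rw [hcong]
  set A := ∑ x ∈ univ.erase (0 : ZMod p), (p + 1 - x.val) with hA
  set Bv := ∑ x ∈ univ.erase (0 : ZMod p), x.val with hBv
  have e1 : A + Bv = (p - 1) * (p + 1) := by
    rw [hA, hBv, ← Finset.sum_add_distrib]
    have : ∀ x ∈ univ.erase (0 : ZMod p), (p + 1 - x.val) + x.val = p + 1 := by
      intro x _
      have := ZMod.val_lt x; omega
    rw [Finset.sum_congr rfl this, Finset.sum_const, smul_eq_mul]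
    congr 1
    rw [Finset.card_erase_of_mem (mem_univ _), Finset.card_univ, ZMod.card]
  have e2 : Bv * 2 = p * (p - 1) := by
    have : Bv = ∑ x : ZMod p, x.val := by
      rw [hBv, ← Finset.sum_erase_add univ _ (mem_univ (0 : ZMod p)), ZMod.val_zero, add_zero]
    rw [this]; exact sum_val p
  obtain ⟨n, rfl⟩ : ∃ n, p = n + 2 := ⟨p - 2, by omega⟩
  have h1 : n + 2 - 1 = n + 1 := by omega
  rw [h1] at e1 e2
  nlinarith [e1, e2]


lemma two_card_TT : 2 * (TT p).card + 8 = p * p + 3 * p + 4 := by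
  have h0 : (TT p) = (TT0 p).erase 0 := by
    ext z
    simp only [TT, TT0, mem_erase, mem_filter, mem_univ, true_and]
    tauto
  have h1 : (0 : ZMod p × ZMod p) ∈ TT0 p := by
    simp only [TT0, mem_filter, mem_univ, true_and]
    simp [ZMod.val_zero]
  have h2 := card_TT0 p
  have hp5 : 1 < p := one_lt_p' p
  have h3 : (TT0 p).card = (TT p).card + 1 := by
    rw [h0, Finset.card_erase_of_mem h1]
    have : 1 ≤ (TT0 p).card := Finset.card_pos.2 ⟨0, h1⟩
    omega
  rw [h3] at h2
  have : 2 ≤ p * p + 3 * p := by nlinarith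
  omega

-- membership helpers
lemma val_one' : (1 : ZMod p).val = 1 := ZMod.val_one p

lemma one_lt_p : 1 < p := one_lt_p' p

lemma memTT_A (t : ZMod p) : ((t, 1) : ZMod p × ZMod p) ∈ TT p := by
  rw [mem_TT]; dsimp only
  constructor
  · rw [val_one']
    have := ZMod.val_lt t; omega
  · intro h
    have : (1 : ZMod p) = 0 := congrArg Prod.snd h
    simpa using this

lemma memTT_B (t : ZMod p) : ((1, t) : ZMod p × ZMod p) ∈ TT p := by
  rw [mem_TT]; dsimp only
  constructor
  · rw [val_one']
    have := ZMod.val_lt t; omega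
  · intro h
    have : (1 : ZMod p) = 0 := congrArg Prod.fst h
    simpa using this

lemma val_negone : (-1 : ZMod p).val = p - 1 := by
  rw [val_neg' p (by simp : (1:ZMod p) ≠ 0), val_one']

lemma val_neg_one_sub (t : ZMod p) : (-1 - t).val = p - 1 - t.val := by
  by_cases ht : t = -1
  · subst ht; simp [val_negone]
  · have h1 : (-1 - t) = -(1 + t) := by ring
    have hne : (1 : ZMod p) + t ≠ 0 := by
      intro h; apply ht; linear_combination h
    have hvt : t.val < p - 1 := by
      have := ZMod.val_lt t
      rcases Nat.lt_or_ge t.val (p-1) with h | h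
      · exact h
      · exfalso; apply ht
        have : t.val = p - 1 := by omega
        have h2 : t = ((p-1 : ℕ) : ZMod p) := by
          rw [← this, ZMod.natCast_val, ZMod.cast_id]
        rw [h2]
        have hp : 0 < p := by have := one_lt_p p; omega
        push_cast [Nat.cast_sub (by omega : 1 ≤ p)]
        simp
    have hadd : ((1:ZMod p) + t).val = 1 + t.val := by
      rw [ZMod.val_add, val_one', Nat.mod_eq_of_lt (by omega)]
    rw [h1, val_neg' p hne, hadd]
    omega

lemma memTT_E (t : ZMod p) : ((t, -1 - t) : ZMod p × ZMod p) ∈ TT p := by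
  rw [mem_TT]; dsimp only
  have h := val_neg_one_sub p t
  constructor
  · have := ZMod.val_lt t; omega
  · intro h0
    have h1 : t = 0 := congrArg Prod.fst h0
    have h2 : (-1 - t : ZMod p) = 0 := congrArg Prod.snd h0
    rw [h1, sub_zero] at h2
    have : (1 : ZMod p) = 0 := by linear_combination -h2
    simpa using this

lemma memTT_X {t : ZMod p} (ht : t ≠ 0) : ((t, 0) : ZMod p × ZMod p) ∈ TT p := by
  rw [mem_TT]
  refine ⟨by simp [ZMod.val_zero]; have := ZMod.val_lt t; omega, ?_⟩
  intro h; exact ht (congrArg Prod.fst h)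

lemma memTT_Y {t : ZMod p} (ht : t ≠ 0) : ((0, t) : ZMod p × ZMod p) ∈ TT p := by
  rw [mem_TT]
  refine ⟨by simp [ZMod.val_zero]; have := ZMod.val_lt t; omega, ?_⟩
  intro h; exact ht (congrArg Prod.snd h)

lemma memTT_D {t : ZMod p} (ht : t ≠ 0) : ((t, -t) : ZMod p × ZMod p) ∈ TT p := by
  rw [mem_TT]; dsimp only
  refine ⟨?_, ?_⟩
  · rw [val_neg' p ht]
    have := ZMod.val_lt t; omega
  · intro h; exact ht (congrArg Prod.fst h)


-- ============ capacity bounds ============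

def cap (c : ZMod p × ZMod p) : ℕ := ((TT p).filter (fun z => cov p c z)).card

def mlt (C : Finset (ZMod p × ZMod p)) (z : ZMod p × ZMod p) : ℕ :=
  (C.filter (fun c => cov p c z)).card

lemma cap_le_p {c : ZMod p × ZMod p} (hc : c ≠ 0) : cap p c ≤ p := by
  by_cases h2 : c.2 ≠ 0
  · have : cap p c ≤ (univ : Finset (ZMod p)).card := by
      apply Finset.card_le_card_of_injOn (fun z => z.1) (fun z _ => mem_univ _)
      intro a ha b hb hab
      simp only [coe_filter, Set.mem_setOf_eq] at ha hb
      have ha2 := ha.2; have hb2 := hb.2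
      unfold cov at ha2 hb2
      apply Prod.ext hab
      have : c.2 * a.2 = c.2 * b.2 := by
        rw [show a.1 = b.1 from hab] at ha2
        linear_combination ha2 - hb2
      exact mul_left_cancel₀ h2 this
    simpa [ZMod.card] using this
  · push_neg at h2
    have h1 : c.1 ≠ 0 := by
      intro h; apply hc; exact Prod.ext h h2
    have : cap p c ≤ (univ : Finset (ZMod p)).card := by
      apply Finset.card_le_card_of_injOn (fun z => z.2) (fun z _ => mem_univ _)
      intro a ha b hb hab
      simp only [coe_filter, Set.mem_setOf_eq] at ha hb
      have ha2 := ha.2; have hb2 := hb.2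
      unfold cov at ha2 hb2
      refine Prod.ext ?_ hab
      have : c.1 * a.1 = c.1 * b.1 := by
        rw [show a.2 = b.2 from hab] at ha2
        linear_combination ha2 - hb2
      exact mul_left_cancel₀ h1 this
    simpa [ZMod.card] using this

lemma cap_generic {c : ZMod p × ZMod p} (h1 : c.1 ≠ 0) (h2 : c.2 ≠ 0) (h3 : c.1 ≠ c.2) :
    2 * cap p c ≤ p + 3 := by
  set lam : ZMod p := 1 - c.1 * c.2⁻¹ with hlam
  set mu : ZMod p := c.2⁻¹ with hmu
  set g : ZMod p → ZMod p := fun x => lam * x + mu with hg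
  have hlam1 : lam ≠ 1 := by
    rw [hlam]
    intro h
    have : c.1 * c.2⁻¹ = 0 := by linear_combination -h
    rcases mul_eq_zero.1 this with h' | h'
    · exact h1 h'
    · exact h2 (inv_eq_zero.1 h')
  have hlam0 : lam ≠ 0 := by
    rw [hlam]
    intro h
    have hc : c.1 * c.2⁻¹ = 1 := by linear_combination -h
    apply h3
    field_simp at hc
    exact hc
  set N : Finset (ZMod p) := univ.filter (fun x : ZMod p => x.val < (g x).val) with hN
  have hNcard : N.card * 2 = p - 1 := claimB p lam mu hlam0 hlam1
  have h0N : (0 : ZMod p) ∈ N := by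
    rw [hN, mem_filter]
    refine ⟨mem_univ _, ?_⟩
    have : g 0 = mu := by rw [hg]; ring
    rw [this, ZMod.val_zero]
    exact val_pos p (by rw [hmu]; exact inv_ne_zero h2)
  set S : Finset (ZMod p) := insert 0 (insert (c.1⁻¹) (insert ((c.1 - c.2)⁻¹) (N.erase 0))) with hS
  have hmap : ∀ z ∈ (TT p).filter (fun z => cov p c z), z.1 ∈ S := by
    intro z hz
    rw [mem_filter] at hz
    obtain ⟨hzT, hzc⟩ := hz
    rw [mem_TT] at hzT
    unfold cov at hzc
    by_cases hx0 : z.1 = 0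
    · rw [hS]; exact mem_insert.2 (Or.inl hx0)
    by_cases hy0 : z.2 = 0
    · have : c.1 * z.1 = 1 := by rw [hy0] at hzc; linear_combination hzc
      have : z.1 = c.1⁻¹ := by field_simp at this ⊢; linear_combination this
      rw [hS]
      exact mem_insert.2 (Or.inr (mem_insert.2 (Or.inl this)))
    -- both nonzero
    have hy : c.2 * z.2 = 1 - c.1 * z.1 := by linear_combination hzc
    have hinv : c.2 * c.2⁻¹ = 1 := mul_inv_cancel₀ h2
    have hgz : g z.1 = z.1 + z.2 := by
      apply mul_left_cancel₀ h2
      rw [hg]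
      show c.2 * (lam * z.1 + mu) = c.2 * (z.1 + z.2)
      rw [hlam, hmu]
      linear_combination (1 - c.1 * z.1) * hinv - hy
    have hv1 : 0 < z.1.val := val_pos p hx0
    have hv2 : 0 < z.2.val := val_pos p hy0
    rcases Nat.lt_or_ge (z.1.val + z.2.val) p with hlt | hge
    · -- in B'
      have : (z.1 + z.2).val = z.1.val + z.2.val := ZMod.val_add_of_lt hlt
      have hmem : z.1 ∈ N := by
        rw [hN, mem_filter]
        refine ⟨mem_univ _, ?_⟩
        rw [hgz, this]; omega
      rw [hS]
      exact mem_insert.2 (Or.inr (mem_insert.2 (Or.inr (mem_insert.2 (Or.inr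
        (Finset.mem_erase.2 ⟨hx0, hmem⟩))))))
    · -- sum = p: z.2 = -z.1, so (c.1 - c.2) z.1 = 1
      have hsum : z.1.val + z.2.val = p := le_antisymm hzT.1 hge
      have hzz : z.1 + z.2 = 0 := by
        have : ((z.1.val + z.2.val : ℕ) : ZMod p) = ((p : ℕ) : ZMod p) := by rw [hsum]
        push_cast at this
        rw [ZMod.natCast_val, ZMod.natCast_val, ZMod.cast_id, ZMod.cast_id] at this
        simpa using this
      have : (c.1 - c.2) * z.1 = 1 := by
        have hz2 : z.2 = -z.1 := by linear_combination hzz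
        rw [hz2] at hzc
        linear_combination hzc
      have hz1 : z.1 = (c.1 - c.2)⁻¹ := by
        have hcc : c.1 - c.2 ≠ 0 := sub_ne_zero.2 h3
        field_simp at this ⊢
        linear_combination this
      rw [hS]
      exact mem_insert.2 (Or.inr (mem_insert.2 (Or.inr (mem_insert.2 (Or.inl hz1)))))
  have hinj : Set.InjOn (fun z : ZMod p × ZMod p => z.1) ((TT p).filter (fun z => cov p c z)) := by
    intro a ha b hb hab
    simp only [coe_filter, Set.mem_setOf_eq] at ha hb
    have ha2 := ha.2; have hb2 := hb.2
    unfold cov at ha2 hb2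
    apply Prod.ext hab
    have : c.2 * a.2 = c.2 * b.2 := by
      rw [show a.1 = b.1 from hab] at ha2
      linear_combination ha2 - hb2
    exact mul_left_cancel₀ h2 this
  have hcap : cap p c ≤ S.card := Finset.card_le_card_of_injOn _ hmap hinj
  have hScard : S.card ≤ 3 + (N.card - 1) := by
    rw [hS]
    calc (insert 0 (insert (c.1⁻¹) (insert ((c.1 - c.2)⁻¹) (N.erase 0)))).card
        ≤ (insert (c.1⁻¹) (insert ((c.1 - c.2)⁻¹) (N.erase 0))).card + 1 :=
          Finset.card_insert_le _ _
      _ ≤ ((insert ((c.1 - c.2)⁻¹) (N.erase 0)).card + 1) + 1 := by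
          have := Finset.card_insert_le (c.1⁻¹) (insert ((c.1 - c.2)⁻¹) (N.erase 0)); omega
      _ ≤ (((N.erase 0).card + 1) + 1) + 1 := by
          have := Finset.card_insert_le ((c.1 - c.2)⁻¹) (N.erase 0); omega
      _ = 3 + (N.card - 1) := by
          rw [Finset.card_erase_of_mem h0N]; omega
  have hN1 : 1 ≤ N.card := Finset.card_pos.2 ⟨0, h0N⟩
  omega


-- ============ double counting ============

lemma sum_mlt (C : Finset (ZMod p × ZMod p)) (S : Finset (ZMod p × ZMod p)) :
    ∑ z ∈ S, mlt p C z = ∑ c ∈ C, (S.filter (fun z => cov p c z)).card := by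
  unfold mlt
  simp only [Finset.card_filter]
  rw [Finset.sum_comm]

lemma one_le_mlt {C : Finset (ZMod p × ZMod p)}
    (hcov : ∀ z ∈ TT p, ∃ c ∈ C, cov p c z) {z : ZMod p × ZMod p} (hz : z ∈ TT p) :
    1 ≤ mlt p C z := by
  obtain ⟨c, hc, hcz⟩ := hcov z hz
  exact Finset.card_pos.2 ⟨c, Finset.mem_filter.2 ⟨hc, hcz⟩⟩

lemma surplus_bound {C : Finset (ZMod p × ZMod p)}
    (hcov : ∀ z ∈ TT p, ∃ c ∈ C, cov p c z) {U : Finset (ZMod p × ZMod p)} (hU : U ⊆ TT p) :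
    ∑ z ∈ U, mlt p C z + (TT p).card ≤ ∑ z ∈ TT p, mlt p C z + U.card := by
  have hsplit : ∑ z ∈ TT p \ U, mlt p C z + ∑ z ∈ U, mlt p C z = ∑ z ∈ TT p, mlt p C z :=
    Finset.sum_sdiff hU
  have hlow : (TT p \ U).card ≤ ∑ z ∈ TT p \ U, mlt p C z := by
    rw [Finset.card_eq_sum_ones]
    apply Finset.sum_le_sum
    intro z hz
    exact one_le_mlt p hcov (Finset.mem_sdiff.1 hz).1
  have hcard : (TT p \ U).card + U.card = (TT p).card := by
    rw [Finset.card_sdiff_of_subset hU]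
    have := Finset.card_le_card hU
    omega
  omega

-- ============ lines as finsets ============

def w1 : ZMod p × ZMod p := (0, 1)
def w2 : ZMod p × ZMod p := (1, 0)
def w3 : ZMod p × ZMod p := (-1, -1)

def FA : Finset (ZMod p × ZMod p) := univ.image (fun t : ZMod p => (t, 1))
def FB : Finset (ZMod p × ZMod p) := univ.image (fun t : ZMod p => (1, t))
def FE : Finset (ZMod p × ZMod p) := univ.image (fun t : ZMod p => (t, -1 - t))
def DX : Finset (ZMod p × ZMod p) := (univ.erase 0).image (fun t : ZMod p => (t, 0))
def DY : Finset (ZMod p × ZMod p) := (univ.erase 0).image (fun t : ZMod p => (0, t))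
def DD : Finset (ZMod p × ZMod p) := (univ.erase 0).image (fun t : ZMod p => (t, -t))

lemma FA_sub : FA p ⊆ TT p := by
  intro z hz; obtain ⟨t, -, rfl⟩ := Finset.mem_image.1 hz; exact memTT_A p t
lemma FB_sub : FB p ⊆ TT p := by
  intro z hz; obtain ⟨t, -, rfl⟩ := Finset.mem_image.1 hz; exact memTT_B p t
lemma FE_sub : FE p ⊆ TT p := by
  intro z hz; obtain ⟨t, -, rfl⟩ := Finset.mem_image.1 hz; exact memTT_E p t
lemma DX_sub : DX p ⊆ TT p := by
  intro z hz; obtain ⟨t, ht, rfl⟩ := Finset.mem_image.1 hz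
  exact memTT_X p (Finset.mem_erase.1 ht).1
lemma DY_sub : DY p ⊆ TT p := by
  intro z hz; obtain ⟨t, ht, rfl⟩ := Finset.mem_image.1 hz
  exact memTT_Y p (Finset.mem_erase.1 ht).1
lemma DD_sub : DD p ⊆ TT p := by
  intro z hz; obtain ⟨t, ht, rfl⟩ := Finset.mem_image.1 hz
  exact memTT_D p (Finset.mem_erase.1 ht).1

lemma FA_card : (FA p).card = p := by
  rw [FA, Finset.card_image_of_injective _ (fun a b h => (Prod.ext_iff.1 h).1)]
  simp [ZMod.card]
lemma FB_card : (FB p).card = p := by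
  rw [FB, Finset.card_image_of_injective _ (fun a b h => (Prod.ext_iff.1 h).2)]
  simp [ZMod.card]
lemma FE_card : (FE p).card = p := by
  rw [FE, Finset.card_image_of_injective _ (fun a b h => (Prod.ext_iff.1 h).1)]
  simp [ZMod.card]
lemma DX_card : (DX p).card = p - 1 := by
  rw [DX, Finset.card_image_of_injective _ (fun a b h => (Prod.ext_iff.1 h).1)]
  rw [Finset.card_erase_of_mem (mem_univ _)]
  simp [ZMod.card]
lemma DY_card : (DY p).card = p - 1 := by
  rw [DY, Finset.card_image_of_injective _ (fun a b h => (Prod.ext_iff.1 h).2)]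
  rw [Finset.card_erase_of_mem (mem_univ _)]
  simp [ZMod.card]
lemma DD_card : (DD p).card = p - 1 := by
  rw [DD, Finset.card_image_of_injective _ (fun a b h => (Prod.ext_iff.1 h).1)]
  rw [Finset.card_erase_of_mem (mem_univ _)]
  simp [ZMod.card]

-- line incidence: when does a dual vector c hit a line at least once / everywhere
lemma FA_hit {c : ZMod p × ZMod p} (h : c.1 ≠ 0) :
    1 ≤ ((FA p).filter (fun z => cov p c z)).card := by
  apply Finset.card_pos.2
  refine ⟨((1 - c.2) * c.1⁻¹, 1), Finset.mem_filter.2 ⟨?_, ?_⟩⟩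
  · exact Finset.mem_image.2 ⟨_, mem_univ _, rfl⟩
  · unfold cov
    field_simp
    try ring
lemma FB_hit {c : ZMod p × ZMod p} (h : c.2 ≠ 0) :
    1 ≤ ((FB p).filter (fun z => cov p c z)).card := by
  apply Finset.card_pos.2
  refine ⟨(1, (1 - c.1) * c.2⁻¹), Finset.mem_filter.2 ⟨?_, ?_⟩⟩
  · exact Finset.mem_image.2 ⟨_, mem_univ _, rfl⟩
  · unfold cov
    field_simp
    try ring
lemma FE_hit {c : ZMod p × ZMod p} (h : c.1 ≠ c.2) :
    1 ≤ ((FE p).filter (fun z => cov p c z)).card := by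
  have hd : c.1 - c.2 ≠ 0 := sub_ne_zero.2 h
  apply Finset.card_pos.2
  refine ⟨((1 + c.2) * (c.1 - c.2)⁻¹, -1 - (1 + c.2) * (c.1 - c.2)⁻¹),
    Finset.mem_filter.2 ⟨?_, ?_⟩⟩
  · exact Finset.mem_image.2 ⟨_, mem_univ _, rfl⟩
  · unfold cov
    field_simp
    try ring
lemma DX_hit {c : ZMod p × ZMod p} (h : c.1 ≠ 0) :
    1 ≤ ((DX p).filter (fun z => cov p c z)).card := by
  apply Finset.card_pos.2
  refine ⟨(c.1⁻¹, 0), Finset.mem_filter.2 ⟨?_, ?_⟩⟩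
  · exact Finset.mem_image.2 ⟨_, Finset.mem_erase.2 ⟨inv_ne_zero h, mem_univ _⟩, rfl⟩
  · unfold cov
    field_simp
    try ring
lemma DY_hit {c : ZMod p × ZMod p} (h : c.2 ≠ 0) :
    1 ≤ ((DY p).filter (fun z => cov p c z)).card := by
  apply Finset.card_pos.2
  refine ⟨(0, c.2⁻¹), Finset.mem_filter.2 ⟨?_, ?_⟩⟩
  · exact Finset.mem_image.2 ⟨_, Finset.mem_erase.2 ⟨inv_ne_zero h, mem_univ _⟩, rfl⟩
  · unfold cov
    field_simp
    try ring
lemma DD_hit {c : ZMod p × ZMod p} (h : c.1 ≠ c.2) :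
    1 ≤ ((DD p).filter (fun z => cov p c z)).card := by
  have hd : c.1 - c.2 ≠ 0 := sub_ne_zero.2 h
  apply Finset.card_pos.2
  refine ⟨((c.1 - c.2)⁻¹, -(c.1 - c.2)⁻¹), Finset.mem_filter.2 ⟨?_, ?_⟩⟩
  · exact Finset.mem_image.2 ⟨_, Finset.mem_erase.2 ⟨inv_ne_zero hd, mem_univ _⟩, rfl⟩
  · unfold cov
    field_simp
    try ring

lemma FA_full : ((FA p).filter (fun z => cov p (w1 p) z)).card = p := by
  rw [Finset.filter_true_of_mem, FA_card]
  intro z hz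
  obtain ⟨t, -, rfl⟩ := Finset.mem_image.1 hz
  show (0 : ZMod p) * t + 1 * 1 = 1
  ring
lemma FB_full : ((FB p).filter (fun z => cov p (w2 p) z)).card = p := by
  rw [Finset.filter_true_of_mem, FB_card]
  intro z hz
  obtain ⟨t, -, rfl⟩ := Finset.mem_image.1 hz
  show (1 : ZMod p) * 1 + 0 * t = 1
  ring
lemma FE_full : ((FE p).filter (fun z => cov p (w3 p) z)).card = p := by
  rw [Finset.filter_true_of_mem, FE_card]
  intro z hz
  obtain ⟨t, -, rfl⟩ := Finset.mem_image.1 hz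
  show (-1 : ZMod p) * t + (-1) * (-1 - t) = 1
  ring


-- ============ witness injections ============

section Witness
variable {C : Finset (ZMod p × ZMod p)}
variable (hcov : ∀ z ∈ TT p, ∃ c ∈ C, cov p c z)

include hcov

lemma nA_ge : p - 1 ≤ (C.filter (fun c => c.1 ≠ 0)).card := by
  classical
  have hmem : ∀ t : ZMod p, t ≠ 0 → ((t, 0) : ZMod p × ZMod p) ∈ TT p := fun t ht => memTT_X p ht
  set f : ZMod p → ZMod p × ZMod p := fun t =>
    if h : t ≠ 0 then (hcov (t,0) (hmem t h)).choose else 0 with hf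
  have hspec : ∀ t : ZMod p, t ≠ 0 → (f t ∈ C ∧ cov p (f t) (t, 0)) := by
    intro t ht
    have := (hcov (t,0) (hmem t ht)).choose_spec
    rw [hf]; simp only [dif_pos ht]
    exact this
  have : (univ.erase (0 : ZMod p)).card ≤ (C.filter (fun c => c.1 ≠ 0)).card := by
    apply Finset.card_le_card_of_injOn f
    · intro t ht
      obtain ⟨hC, hcv⟩ := hspec t (Finset.mem_erase.1 ht).1
      refine Finset.mem_filter.2 ⟨hC, ?_⟩
      unfold cov at hcv
      intro h0
      rw [h0] at hcv
      simp only [zero_mul, mul_zero, add_zero, zero_add] at hcv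
      exact one_ne_zero hcv.symm
    · intro a ha b hb hab
      rw [Finset.coe_erase] at ha hb
      have ha0 : a ≠ 0 := by simpa using (Set.mem_diff _).1 ha |>.2
      have hb0 : b ≠ 0 := by simpa using (Set.mem_diff _).1 hb |>.2
      obtain ⟨-, hca⟩ := hspec a ha0
      obtain ⟨-, hcb⟩ := hspec b hb0
      unfold cov at hca hcb
      rw [hab] at hca
      simp only [mul_zero, add_zero] at hca hcb
      have hfb1 : (f b).1 ≠ 0 := by
        intro h; rw [h, zero_mul] at hcb; exact one_ne_zero hcb.symm
      exact mul_left_cancel₀ hfb1 (hca.trans hcb.symm)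
  rw [Finset.card_erase_of_mem (mem_univ _), Finset.card_univ, ZMod.card] at this
  exact this

lemma nB_ge : p - 1 ≤ (C.filter (fun c => c.2 ≠ 0)).card := by
  classical
  have hmem : ∀ t : ZMod p, t ≠ 0 → ((0, t) : ZMod p × ZMod p) ∈ TT p := fun t ht => memTT_Y p ht
  set f : ZMod p → ZMod p × ZMod p := fun t =>
    if h : t ≠ 0 then (hcov (0,t) (hmem t h)).choose else 0 with hf
  have hspec : ∀ t : ZMod p, t ≠ 0 → (f t ∈ C ∧ cov p (f t) (0, t)) := by
    intro t ht
    have := (hcov (0,t) (hmem t ht)).choose_spec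
    rw [hf]; simp only [dif_pos ht]
    exact this
  have : (univ.erase (0 : ZMod p)).card ≤ (C.filter (fun c => c.2 ≠ 0)).card := by
    apply Finset.card_le_card_of_injOn f
    · intro t ht
      obtain ⟨hC, hcv⟩ := hspec t (Finset.mem_erase.1 ht).1
      refine Finset.mem_filter.2 ⟨hC, ?_⟩
      unfold cov at hcv
      intro h0
      rw [h0] at hcv
      simp only [zero_mul, mul_zero, add_zero, zero_add] at hcv
      exact one_ne_zero hcv.symm
    · intro a ha b hb hab
      rw [Finset.coe_erase] at ha hb
      have ha0 : a ≠ 0 := by simpa using (Set.mem_diff _).1 ha |>.2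
      have hb0 : b ≠ 0 := by simpa using (Set.mem_diff _).1 hb |>.2
      obtain ⟨-, hca⟩ := hspec a ha0
      obtain ⟨-, hcb⟩ := hspec b hb0
      unfold cov at hca hcb
      rw [hab] at hca
      simp only [mul_zero, zero_mul, zero_add] at hca hcb
      have hfb1 : (f b).2 ≠ 0 := by
        intro h; rw [h, zero_mul] at hcb; exact one_ne_zero hcb.symm
      exact mul_left_cancel₀ hfb1 (hca.trans hcb.symm)
  rw [Finset.card_erase_of_mem (mem_univ _), Finset.card_univ, ZMod.card] at this
  exact this

lemma nE_ge : p - 1 ≤ (C.filter (fun c => c.1 ≠ c.2)).card := by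
  classical
  have hmem : ∀ t : ZMod p, t ≠ 0 → ((t, -t) : ZMod p × ZMod p) ∈ TT p := fun t ht => memTT_D p ht
  set f : ZMod p → ZMod p × ZMod p := fun t =>
    if h : t ≠ 0 then (hcov (t,-t) (hmem t h)).choose else 0 with hf
  have hspec : ∀ t : ZMod p, t ≠ 0 → (f t ∈ C ∧ cov p (f t) (t, -t)) := by
    intro t ht
    have := (hcov (t,-t) (hmem t ht)).choose_spec
    rw [hf]; simp only [dif_pos ht]
    exact this
  have key : ∀ t : ZMod p, t ≠ 0 → ((f t).1 - (f t).2) * t = 1 := by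
    intro t ht
    have hcv := (hspec t ht).2
    unfold cov at hcv
    linear_combination hcv
  have : (univ.erase (0 : ZMod p)).card ≤ (C.filter (fun c => c.1 ≠ c.2)).card := by
    apply Finset.card_le_card_of_injOn f
    · intro t ht
      have ht0 := (Finset.mem_erase.1 ht).1
      refine Finset.mem_filter.2 ⟨(hspec t ht0).1, ?_⟩
      intro h0
      have := key t ht0
      rw [h0, sub_self, zero_mul] at this
      exact one_ne_zero this.symm
    · intro a ha b hb hab
      rw [Finset.coe_erase] at ha hb
      have ha0 : a ≠ 0 := by simpa using (Set.mem_diff _).1 ha |>.2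
      have hb0 : b ≠ 0 := by simpa using (Set.mem_diff _).1 hb |>.2
      have hka := key a ha0
      have hkb := key b hb0
      rw [hab] at hka
      have hd : (f b).1 - (f b).2 ≠ 0 := by
        intro h; rw [h, zero_mul] at hkb; exact one_ne_zero hkb.symm
      exact mul_left_cancel₀ hd (hka.trans hkb.symm)
  rw [Finset.card_erase_of_mem (mem_univ _), Finset.card_univ, ZMod.card] at this
  exact this

lemma trichA (hw : w1 p ∉ C) : p ≤ (C.filter (fun c => c.1 ≠ 0)).card := by
  classical
  set f : ZMod p → ZMod p × ZMod p := fun t => (hcov (t,1) (memTT_A p t)).choose with hf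
  have hspec : ∀ t : ZMod p, f t ∈ C ∧ cov p (f t) (t, 1) := by
    intro t; exact (hcov (t,1) (memTT_A p t)).choose_spec
  have hne : ∀ t : ZMod p, (f t).1 ≠ 0 := by
    intro t h0
    have hcv := (hspec t).2
    unfold cov at hcv
    rw [h0, zero_mul, zero_add, mul_one] at hcv
    apply hw
    have : f t = w1 p := by
      rw [w1]; exact Prod.ext h0 hcv
    rw [← this]; exact (hspec t).1
  have : (univ : Finset (ZMod p)).card ≤ (C.filter (fun c => c.1 ≠ 0)).card := by
    apply Finset.card_le_card_of_injOn f
    · intro t _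
      exact Finset.mem_filter.2 ⟨(hspec t).1, hne t⟩
    · intro a _ b _ hab
      have hca := (hspec a).2
      have hcb := (hspec b).2
      unfold cov at hca hcb
      rw [hab] at hca
      have := hca.trans hcb.symm
      have h2 : (f b).1 * a = (f b).1 * b := by linear_combination this
      exact mul_left_cancel₀ (hne b) h2
  rwa [Finset.card_univ, ZMod.card] at this

lemma trichB (hw : w2 p ∉ C) : p ≤ (C.filter (fun c => c.2 ≠ 0)).card := by
  classical
  set f : ZMod p → ZMod p × ZMod p := fun t => (hcov (1,t) (memTT_B p t)).choose with hf
  have hspec : ∀ t : ZMod p, f t ∈ C ∧ cov p (f t) (1, t) := by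
    intro t; exact (hcov (1,t) (memTT_B p t)).choose_spec
  have hne : ∀ t : ZMod p, (f t).2 ≠ 0 := by
    intro t h0
    have hcv := (hspec t).2
    unfold cov at hcv
    rw [h0, zero_mul, add_zero, mul_one] at hcv
    apply hw
    have : f t = w2 p := by
      rw [w2]; exact Prod.ext hcv h0
    rw [← this]; exact (hspec t).1
  have : (univ : Finset (ZMod p)).card ≤ (C.filter (fun c => c.2 ≠ 0)).card := by
    apply Finset.card_le_card_of_injOn f
    · intro t _
      exact Finset.mem_filter.2 ⟨(hspec t).1, hne t⟩
    · intro a _ b _ hab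
      have hca := (hspec a).2
      have hcb := (hspec b).2
      unfold cov at hca hcb
      rw [hab] at hca
      have := hca.trans hcb.symm
      have h2 : (f b).2 * a = (f b).2 * b := by linear_combination this
      exact mul_left_cancel₀ (hne b) h2
  rwa [Finset.card_univ, ZMod.card] at this

lemma trichE (hw : w3 p ∉ C) : p ≤ (C.filter (fun c => c.1 ≠ c.2)).card := by
  classical
  set f : ZMod p → ZMod p × ZMod p := fun t => (hcov (t, -1-t) (memTT_E p t)).choose with hf
  have hspec : ∀ t : ZMod p, f t ∈ C ∧ cov p (f t) (t, -1-t) := by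
    intro t; exact (hcov (t,-1-t) (memTT_E p t)).choose_spec
  have key : ∀ t : ZMod p, ((f t).1 - (f t).2) * t - (f t).2 = 1 := by
    intro t
    have hcv := (hspec t).2
    unfold cov at hcv
    linear_combination hcv
  have hne : ∀ t : ZMod p, (f t).1 ≠ (f t).2 := by
    intro t h0
    have hk := key t
    rw [h0, sub_self, zero_mul, zero_sub] at hk
    apply hw
    have h2 : (f t).2 = -1 := by linear_combination -hk
    have : f t = w3 p := by
      rw [w3]; exact Prod.ext (by rw [h0, h2]) h2
    rw [← this]; exact (hspec t).1
  have : (univ : Finset (ZMod p)).card ≤ (C.filter (fun c => c.1 ≠ c.2)).card := by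
    apply Finset.card_le_card_of_injOn f
    · intro t _
      exact Finset.mem_filter.2 ⟨(hspec t).1, hne t⟩
    · intro a _ b _ hab
      have hka := key a
      have hkb := key b
      rw [hab] at hka
      have h2 : ((f b).1 - (f b).2) * a = ((f b).1 - (f b).2) * b := by
        linear_combination hka - hkb
      exact mul_left_cancel₀ (sub_ne_zero.2 (hne b)) h2
  rwa [Finset.card_univ, ZMod.card] at this

end Witness


-- ============ small numeric facts ============

lemma two_ne (hp5 : 5 ≤ p) : (2 : ZMod p) ≠ 0 := by
  intro h
  have : ((2:ℕ) : ZMod p) = 0 := by exact_mod_cast h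
  rw [ZMod.natCast_eq_zero_iff] at this
  have := Nat.le_of_dvd (by norm_num) this
  omega

lemma three_ne (hp5 : 5 ≤ p) : (3 : ZMod p) ≠ 0 := by
  intro h
  have : ((3:ℕ) : ZMod p) = 0 := by exact_mod_cast h
  rw [ZMod.natCast_eq_zero_iff] at this
  have := Nat.le_of_dvd (by norm_num) this
  omega

lemma w_ne12 : w1 p ≠ w2 p := by
  rw [w1, w2]
  intro h
  exact one_ne_zero ((Prod.ext_iff.1 h).2)

lemma w_ne13 : w1 p ≠ w3 p := by
  rw [w1, w3]
  intro h
  have := (Prod.ext_iff.1 h).1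
  have h2 : (1 : ZMod p) = 0 := by linear_combination this
  exact one_ne_zero h2

lemma w_ne23 : w2 p ≠ w3 p := by
  rw [w2, w3]
  intro h
  have := (Prod.ext_iff.1 h).2
  have h2 : (1 : ZMod p) = 0 := by linear_combination this
  exact one_ne_zero h2

-- mem characterizations
lemma mem_FA {z : ZMod p × ZMod p} : z ∈ FA p ↔ z.2 = 1 := by
  rw [FA, Finset.mem_image]
  constructor
  · rintro ⟨t, -, rfl⟩; rfl
  · intro h; exact ⟨z.1, mem_univ _, by rw [← h]⟩

lemma mem_FB {z : ZMod p × ZMod p} : z ∈ FB p ↔ z.1 = 1 := by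
  rw [FB, Finset.mem_image]
  constructor
  · rintro ⟨t, -, rfl⟩; rfl
  · intro h; exact ⟨z.2, mem_univ _, by rw [← h]⟩

lemma mem_FE {z : ZMod p × ZMod p} : z ∈ FE p ↔ z.2 = -1 - z.1 := by
  rw [FE, Finset.mem_image]
  constructor
  · rintro ⟨t, -, rfl⟩; rfl
  · intro h; exact ⟨z.1, mem_univ _, by rw [← h]⟩

lemma mem_DD {z : ZMod p × ZMod p} : z ∈ DD p ↔ z.2 = -z.1 ∧ z.1 ≠ 0 := by
  rw [DD, Finset.mem_image]
  constructor
  · rintro ⟨t, ht, rfl⟩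
    exact ⟨rfl, (Finset.mem_erase.1 ht).1⟩
  · rintro ⟨h, h0⟩
    exact ⟨z.1, Finset.mem_erase.2 ⟨h0, mem_univ _⟩, by rw [← h]⟩

lemma mem_DX {z : ZMod p × ZMod p} : z ∈ DX p ↔ z.2 = 0 ∧ z.1 ≠ 0 := by
  rw [DX, Finset.mem_image]
  constructor
  · rintro ⟨t, ht, rfl⟩
    exact ⟨rfl, (Finset.mem_erase.1 ht).1⟩
  · rintro ⟨h, h0⟩
    exact ⟨z.1, Finset.mem_erase.2 ⟨h0, mem_univ _⟩, by rw [← h]⟩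

lemma mem_DY {z : ZMod p × ZMod p} : z ∈ DY p ↔ z.1 = 0 ∧ z.2 ≠ 0 := by
  rw [DY, Finset.mem_image]
  constructor
  · rintro ⟨t, ht, rfl⟩
    exact ⟨rfl, (Finset.mem_erase.1 ht).1⟩
  · rintro ⟨h, h0⟩
    exact ⟨z.2, Finset.mem_erase.2 ⟨h0, mem_univ _⟩, by rw [← h]⟩

-- ============ class structure ============

section Classes
variable {C : Finset (ZMod p × ZMod p)}
variable (hcov : ∀ z ∈ TT p, ∃ c ∈ C, cov p c z)

include hcov

lemma card_eq_p (hn : C.card ≤ p) : C.card = p := by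
  have h1 := nA_ge p hcov
  have hle : (C.filter (fun c => c.1 ≠ 0)).card ≤ C.card := Finset.card_filter_le _ _
  rcases Nat.lt_or_ge C.card p with hlt | hge
  · exfalso
    have hw1 : w1 p ∈ C := by
      by_contra hw
      have := trichA p hcov hw
      omega
    have hw1mem : w1 p ∈ C.filter (fun c => c.1 = 0) :=
      Finset.mem_filter.2 ⟨hw1, rfl⟩
    have hsplit := Finset.card_filter_add_card_filter_not
      (s := C) (p := fun c => c.1 ≠ 0)
    have h2 : 1 ≤ (C.filter (fun c => ¬ c.1 ≠ 0)).card := by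
      apply Finset.card_pos.2
      exact ⟨w1 p, Finset.mem_filter.2 ⟨hw1, by simp [w1]⟩⟩
    have hp2 : 2 ≤ p := by have := one_lt_p' p; omega
    omega
  · omega

lemma classA : ∀ c ∈ C, (hn : C.card ≤ p) → c.1 = 0 → c = w1 p := by
  intro c hc hn h0
  by_cases hw : w1 p ∈ C
  · have h1 := nA_ge p hcov
    have hsplit := Finset.card_filter_add_card_filter_not
      (s := C) (p := fun c => c.1 ≠ 0)
    have hcC := card_eq_p p hcov hn
    -- both c and w1 in the ≤1-element filter
    have hmemc : c ∈ C.filter (fun c => ¬ c.1 ≠ 0) := Finset.mem_filter.2 ⟨hc, by simp [h0]⟩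
    have hmemw : w1 p ∈ C.filter (fun c => ¬ c.1 ≠ 0) := Finset.mem_filter.2 ⟨hw, by simp [w1]⟩
    have hone : (C.filter (fun c => ¬ c.1 ≠ 0)).card ≤ 1 := by
      have hp2 : 2 ≤ p := by have := one_lt_p' p; omega
      omega
    have := Finset.card_le_one.1 hone c hmemc (w1 p) hmemw
    exact this
  · exfalso
    have h2 := trichA p hcov hw
    have hle : (C.filter (fun c => c.1 ≠ 0)).card ≤ C.card := Finset.card_filter_le _ _
    have : C.filter (fun c => c.1 ≠ 0) = C := Finset.eq_of_subset_of_card_le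
      (Finset.filter_subset _ _) (by omega)
    have hcmem : c ∈ C.filter (fun c => c.1 ≠ 0) := by rw [this]; exact hc
    exact (Finset.mem_filter.1 hcmem).2 h0

lemma classB : ∀ c ∈ C, (hn : C.card ≤ p) → c.2 = 0 → c = w2 p := by
  intro c hc hn h0
  by_cases hw : w2 p ∈ C
  · have h1 := nB_ge p hcov
    have hsplit := Finset.card_filter_add_card_filter_not
      (s := C) (p := fun c => c.2 ≠ 0)
    have hcC := card_eq_p p hcov hn
    have hmemc : c ∈ C.filter (fun c => ¬ c.2 ≠ 0) := Finset.mem_filter.2 ⟨hc, by simp [h0]⟩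
    have hmemw : w2 p ∈ C.filter (fun c => ¬ c.2 ≠ 0) := Finset.mem_filter.2 ⟨hw, by simp [w2]⟩
    have hone : (C.filter (fun c => ¬ c.2 ≠ 0)).card ≤ 1 := by
      have hp2 : 2 ≤ p := by have := one_lt_p' p; omega
      omega
    exact Finset.card_le_one.1 hone c hmemc (w2 p) hmemw
  · exfalso
    have h2 := trichB p hcov hw
    have hle : (C.filter (fun c => c.2 ≠ 0)).card ≤ C.card := Finset.card_filter_le _ _
    have : C.filter (fun c => c.2 ≠ 0) = C := Finset.eq_of_subset_of_card_le
      (Finset.filter_subset _ _) (by omega)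
    have hcmem : c ∈ C.filter (fun c => c.2 ≠ 0) := by rw [this]; exact hc
    exact (Finset.mem_filter.1 hcmem).2 h0

lemma classE : ∀ c ∈ C, (hn : C.card ≤ p) → c.1 = c.2 → c = w3 p := by
  intro c hc hn h0
  by_cases hw : w3 p ∈ C
  · have h1 := nE_ge p hcov
    have hsplit := Finset.card_filter_add_card_filter_not
      (s := C) (p := fun c => c.1 ≠ c.2)
    have hcC := card_eq_p p hcov hn
    have hmemc : c ∈ C.filter (fun c => ¬ c.1 ≠ c.2) := Finset.mem_filter.2 ⟨hc, by simp [h0]⟩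
    have hmemw : w3 p ∈ C.filter (fun c => ¬ c.1 ≠ c.2) := Finset.mem_filter.2 ⟨hw, by simp [w3]⟩
    have hone : (C.filter (fun c => ¬ c.1 ≠ c.2)).card ≤ 1 := by
      have hp2 : 2 ≤ p := by have := one_lt_p' p; omega
      omega
    exact Finset.card_le_one.1 hone c hmemc (w3 p) hmemw
  · exfalso
    have h2 := trichE p hcov hw
    have hle : (C.filter (fun c => c.1 ≠ c.2)).card ≤ C.card := Finset.card_filter_le _ _
    have : C.filter (fun c => c.1 ≠ c.2) = C := Finset.eq_of_subset_of_card_le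
      (Finset.filter_subset _ _) (by omega)
    have hcmem : c ∈ C.filter (fun c => c.1 ≠ c.2) := by rw [this]; exact hc
    exact (Finset.mem_filter.1 hcmem).2 h0

lemma allA (hw : w1 p ∉ C) (hn : C.card ≤ p) : ∀ c ∈ C, c.1 ≠ 0 := by
  intro c hc h0
  exact hw ((classA p hcov c hc hn h0) ▸ hc)

lemma allB (hw : w2 p ∉ C) (hn : C.card ≤ p) : ∀ c ∈ C, c.2 ≠ 0 := by
  intro c hc h0
  exact hw ((classB p hcov c hc hn h0) ▸ hc)

lemma allE (hw : w3 p ∉ C) (hn : C.card ≤ p) : ∀ c ∈ C, c.1 ≠ c.2 := by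
  intro c hc h0
  exact hw ((classE p hcov c hc hn h0) ▸ hc)

end Classes


-- ============ case lemmas ============

section Cases
variable {C : Finset (ZMod p × ZMod p)}
variable (hp5 : 5 ≤ p)
variable (hcov : ∀ z ∈ TT p, ∃ c ∈ C, cov p c z)
variable (hn : C.card ≤ p)

include hp5 hcov hn

lemma case_s0 (hw1 : w1 p ∉ C) (hw2 : w2 p ∉ C) (hw3 : w3 p ∉ C) : False := by
  have hA := allA p hcov hw1 hn
  have hB := allB p hcov hw2 hn
  have hE := allE p hcov hw3 hn
  have hcard := card_eq_p p hcov hn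
  -- supply bound
  have hsupply : 2 * ∑ c ∈ C, cap p c ≤ p * (p + 3) := by
    calc 2 * ∑ c ∈ C, cap p c = ∑ c ∈ C, 2 * cap p c := by rw [Finset.mul_sum]
      _ ≤ ∑ c ∈ C, (p + 3) := Finset.sum_le_sum (fun c hc =>
          cap_generic p (hA c hc) (hB c hc) (hE c hc))
      _ = p * (p + 3) := by rw [Finset.sum_const, smul_eq_mul, hcard]
  -- U = DX ∪ DY ∪ DD
  have hdisjXY : Disjoint (DX p) (DY p) := by
    rw [Finset.disjoint_left]
    intro z hz hz'
    exact ((mem_DY p).1 hz').2 (((mem_DX p)).1 hz).1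
  have hdisjXD : Disjoint (DX p) (DD p) := by
    rw [Finset.disjoint_left]
    intro z hz hz'
    obtain ⟨h1, h2⟩ := (mem_DX p).1 hz
    obtain ⟨h3, h4⟩ := (mem_DD p).1 hz'
    rw [h1] at h3
    exact h4 (by linear_combination h3)
  have hdisjYD : Disjoint (DY p) (DD p) := by
    rw [Finset.disjoint_left]
    intro z hz hz'
    exact ((mem_DD p).1 hz').2 ((mem_DY p).1 hz).1
  have hdisj : Disjoint (DX p ∪ DY p) (DD p) := Finset.disjoint_union_left.2 ⟨hdisjXD, hdisjYD⟩
  set U := (DX p ∪ DY p) ∪ DD p with hU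
  have hUsub : U ⊆ TT p := by
    rw [hU]
    apply Finset.union_subset (Finset.union_subset (DX_sub p) (DY_sub p)) (DD_sub p)
  have hUcard : U.card = 3 * (p - 1) := by
    rw [hU, Finset.card_union_of_disjoint hdisj, Finset.card_union_of_disjoint hdisjXY,
      DX_card, DY_card, DD_card]
    ring
  have hUsum : 3 * p ≤ ∑ z ∈ U, mlt p C z := by
    rw [hU, Finset.sum_union hdisj, Finset.sum_union hdisjXY]
    have h1 : p ≤ ∑ z ∈ DX p, mlt p C z := by
      rw [sum_mlt]
      calc p = ∑ c ∈ C, 1 := by rw [Finset.sum_const, smul_eq_mul, hcard, mul_one]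
        _ ≤ _ := Finset.sum_le_sum (fun c hc => DX_hit p (hA c hc))
    have h2 : p ≤ ∑ z ∈ DY p, mlt p C z := by
      rw [sum_mlt]
      calc p = ∑ c ∈ C, 1 := by rw [Finset.sum_const, smul_eq_mul, hcard, mul_one]
        _ ≤ _ := Finset.sum_le_sum (fun c hc => DY_hit p (hB c hc))
    have h3 : p ≤ ∑ z ∈ DD p, mlt p C z := by
      rw [sum_mlt]
      calc p = ∑ c ∈ C, 1 := by rw [Finset.sum_const, smul_eq_mul, hcard, mul_one]
        _ ≤ _ := Finset.sum_le_sum (fun c hc => DD_hit p (hE c hc))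
    omega
  have hsb := surplus_bound p hcov hUsub
  have hTT := two_card_TT p
  have hTTsum : ∑ z ∈ TT p, mlt p C z = ∑ c ∈ C, cap p c := sum_mlt p C (TT p)
  have hexp : p * (p+3) = p*p + 3*p := by ring
  omega

lemma case_s1 (hw1 : w1 p ∈ C) (hw2 : w2 p ∉ C) (hw3 : w3 p ∉ C) : False := by
  have hB := allB p hcov hw2 hn
  have hE := allE p hcov hw3 hn
  have hcard := card_eq_p p hcov hn
  set G := C.erase (w1 p) with hG
  have hGcard : G.card + 1 = p := by
    rw [hG, Finset.card_erase_of_mem hw1, hcard]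
    omega
  have hGgen : ∀ c ∈ G, c.1 ≠ 0 ∧ c.2 ≠ 0 ∧ c.1 ≠ c.2 := by
    intro c hcG
    have hc : c ∈ C := Finset.mem_of_mem_erase hcG
    refine ⟨?_, hB c hc, hE c hc⟩
    intro h0
    exact (Finset.mem_erase.1 hcG).1 (classA p hcov c hc hn h0)
  have hsplitC : ∀ f : (ZMod p × ZMod p) → ℕ, ∑ c ∈ C, f c = f (w1 p) + ∑ c ∈ G, f c := by
    intro f
    rw [hG, ← Finset.sum_erase_add C f hw1, add_comm]
  have hsupply : 2 * ∑ c ∈ C, cap p c ≤ 2 * p + G.card * (p + 3) := by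
    rw [hsplitC (cap p), Nat.mul_add]
    have h1 : cap p (w1 p) ≤ p := by
      apply cap_le_p
      rw [w1]
      intro h
      exact one_ne_zero (congrArg Prod.snd h)
    have h2 : 2 * ∑ c ∈ G, cap p c ≤ G.card * (p+3) := by
      calc 2 * ∑ c ∈ G, cap p c = ∑ c ∈ G, 2 * cap p c := by rw [Finset.mul_sum]
        _ ≤ ∑ c ∈ G, (p + 3) := Finset.sum_le_sum (fun c hc =>
            cap_generic p (hGgen c hc).1 (hGgen c hc).2.1 (hGgen c hc).2.2)
        _ = G.card * (p+3) := by rw [Finset.sum_const, smul_eq_mul]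
    omega
  have hUsum : 2 * p - 1 ≤ ∑ z ∈ FA p, mlt p C z := by
    rw [sum_mlt, hsplitC]
    have h1 : ((FA p).filter (fun z => cov p (w1 p) z)).card = p := FA_full p
    have h2 : ∑ c ∈ G, 1 ≤ ∑ c ∈ G, ((FA p).filter (fun z => cov p c z)).card :=
      Finset.sum_le_sum (fun c hc => FA_hit p (hGgen c hc).1)
    rw [Finset.sum_const, smul_eq_mul, mul_one] at h2
    omega
  have hsb := surplus_bound p hcov (FA_sub p)
  have hTT := two_card_TT p
  have hTTsum : ∑ z ∈ TT p, mlt p C z = ∑ c ∈ C, cap p c := sum_mlt p C (TT p)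
  have hFAcard := FA_card p
  have hprod : G.card * (p+3) + 1 * (p+3) = p * (p+3) := by
    rw [← add_mul, hGcard]
  have hexp : p * (p+3) = p*p + 3*p := by ring
  omega


lemma case_s2 (hw1 : w1 p ∈ C) (hw2 : w2 p ∈ C) (hw3 : w3 p ∉ C) : False := by
  have hE := allE p hcov hw3 hn
  have hcard := card_eq_p p hcov hn
  have h2ne := two_ne p hp5
  have hw2' : w2 p ∈ C.erase (w1 p) := Finset.mem_erase.2 ⟨(w_ne12 p).symm, hw2⟩
  set G := (C.erase (w1 p)).erase (w2 p) with hG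
  have hGcard : G.card + 2 = p := by
    rw [hG, Finset.card_erase_of_mem hw2', Finset.card_erase_of_mem hw1, hcard]
    have : 2 ≤ p := by omega
    omega
  have hGmem : ∀ c ∈ G, c ∈ C ∧ c ≠ w1 p ∧ c ≠ w2 p := by
    intro c hc
    rw [hG] at hc
    have h1 := Finset.mem_erase.1 hc
    have h2 := Finset.mem_erase.1 h1.2
    exact ⟨h2.2, h2.1, h1.1⟩
  have hGgen : ∀ c ∈ G, c.1 ≠ 0 ∧ c.2 ≠ 0 ∧ c.1 ≠ c.2 := by
    intro c hcG
    obtain ⟨hc, hne1, hne2⟩ := hGmem c hcG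
    refine ⟨?_, ?_, hE c hc⟩
    · intro h0; exact hne1 (classA p hcov c hc hn h0)
    · intro h0; exact hne2 (classB p hcov c hc hn h0)
  have hsplitC : ∀ f : (ZMod p × ZMod p) → ℕ,
      ∑ c ∈ C, f c = ∑ c ∈ G, f c + f (w2 p) + f (w1 p) := by
    intro f
    rw [hG]
    rw [← Finset.sum_erase_add C f hw1, ← Finset.sum_erase_add (C.erase (w1 p)) f hw2']
  have hw1ne0 : w1 p ≠ 0 := by
    rw [w1]; intro h; exact one_ne_zero (congrArg Prod.snd h)
  have hw2ne0 : w2 p ≠ 0 := by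
    rw [w2]; intro h; exact one_ne_zero (congrArg Prod.fst h)
  have hsupply : 2 * ∑ c ∈ C, cap p c ≤ 4 * p + G.card * (p + 3) := by
    rw [hsplitC (cap p)]
    have h1 : cap p (w1 p) ≤ p := cap_le_p p hw1ne0
    have h2 : cap p (w2 p) ≤ p := cap_le_p p hw2ne0
    have h3 : 2 * ∑ c ∈ G, cap p c ≤ G.card * (p+3) := by
      calc 2 * ∑ c ∈ G, cap p c = ∑ c ∈ G, 2 * cap p c := by rw [Finset.mul_sum]
        _ ≤ ∑ c ∈ G, (p + 3) := Finset.sum_le_sum (fun c hc =>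
            cap_generic p (hGgen c hc).1 (hGgen c hc).2.1 (hGgen c hc).2.2)
        _ = G.card * (p+3) := by rw [Finset.sum_const, smul_eq_mul]
    omega
  -- line sums
  have hSFA : 2 * p - 1 ≤ ∑ z ∈ FA p, mlt p C z := by
    rw [sum_mlt, hsplitC]
    have h1 : ((FA p).filter (fun z => cov p (w1 p) z)).card = p := FA_full p
    have h2 : 1 ≤ ((FA p).filter (fun z => cov p (w2 p) z)).card := by
      apply FA_hit; rw [w2]; exact one_ne_zero
    have h3 : G.card ≤ ∑ c ∈ G, ((FA p).filter (fun z => cov p c z)).card := by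
      rw [Finset.card_eq_sum_ones]
      exact Finset.sum_le_sum (fun c hc => FA_hit p (hGgen c hc).1)
    omega
  have hSFB : 2 * p - 1 ≤ ∑ z ∈ FB p, mlt p C z := by
    rw [sum_mlt, hsplitC]
    have h1 : ((FB p).filter (fun z => cov p (w2 p) z)).card = p := FB_full p
    have h2 : 1 ≤ ((FB p).filter (fun z => cov p (w1 p) z)).card := by
      apply FB_hit; rw [w1]; exact one_ne_zero
    have h3 : G.card ≤ ∑ c ∈ G, ((FB p).filter (fun z => cov p c z)).card := by
      rw [Finset.card_eq_sum_ones]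
      exact Finset.sum_le_sum (fun c hc => FB_hit p (hGgen c hc).2.1)
    omega
  have hSDD : p ≤ ∑ z ∈ DD p, mlt p C z := by
    rw [sum_mlt, hsplitC]
    have h1 : 1 ≤ ((DD p).filter (fun z => cov p (w1 p) z)).card := by
      apply DD_hit; rw [w1]; exact zero_ne_one
    have h2 : 1 ≤ ((DD p).filter (fun z => cov p (w2 p) z)).card := by
      apply DD_hit; rw [w2]; exact one_ne_zero
    have h3 : G.card ≤ ∑ c ∈ G, ((DD p).filter (fun z => cov p c z)).card := by
      rw [Finset.card_eq_sum_ones]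
      exact Finset.sum_le_sum (fun c hc => DD_hit p (hGgen c hc).2.2)
    omega
  -- intersections
  have hint1 : FB p ∩ FA p = {((1:ZMod p), (1:ZMod p))} := by
    ext z
    rw [Finset.mem_inter, mem_FB, mem_FA, Finset.mem_singleton, Prod.ext_iff]
  have hint2 : DD p ∩ (FA p ∪ FB p) = {((-1:ZMod p), (1:ZMod p)), ((1:ZMod p), (-1:ZMod p))} := by
    ext z
    rw [Finset.mem_inter, mem_DD, Finset.mem_union, mem_FA, mem_FB,
      Finset.mem_insert, Finset.mem_singleton, Prod.ext_iff, Prod.ext_iff]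
    constructor
    · rintro ⟨⟨hz, hz0⟩, h | h⟩
      · left
        constructor
        · rw [h] at hz; linear_combination hz
        · exact h
      · right
        refine ⟨h, ?_⟩
        rw [h] at hz; exact hz
    · rintro (⟨h1, h2⟩ | ⟨h1, h2⟩)
      · refine ⟨⟨?_, ?_⟩, Or.inl h2⟩
        · rw [h1, h2]; try ring
        · rw [h1]; intro h; exact one_ne_zero (by linear_combination -h)
      · refine ⟨⟨?_, ?_⟩, Or.inr h1⟩
        · rw [h1, h2]; try ring
        · rw [h1]; exact one_ne_zero
  have hne_mm : ((-1:ZMod p), (1:ZMod p)) ≠ ((1:ZMod p), (-1:ZMod p)) := by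
    intro h
    have := (Prod.ext_iff.1 h).1
    exact h2ne (by linear_combination -this)
  -- corner bounds
  have hcorner1 : mlt p C (1, 1) ≤ 2 + (G.filter (fun c => cov p c (1,1))).card := by
    unfold mlt
    have hsub : C.filter (fun c => cov p c (1,1)) ⊆
        insert (w1 p) (insert (w2 p) (G.filter (fun c => cov p c (1,1)))) := by
      intro c hc
      obtain ⟨hcC, hccov⟩ := Finset.mem_filter.1 hc
      by_cases he1 : c = w1 p
      · exact Finset.mem_insert.2 (Or.inl he1)
      by_cases he2 : c = w2 p
      · exact Finset.mem_insert.2 (Or.inr (Finset.mem_insert.2 (Or.inl he2)))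
      · refine Finset.mem_insert.2 (Or.inr (Finset.mem_insert.2 (Or.inr ?_)))
        refine Finset.mem_filter.2 ⟨?_, hccov⟩
        rw [hG]
        exact Finset.mem_erase.2 ⟨he2, Finset.mem_erase.2 ⟨he1, hcC⟩⟩
    calc (C.filter (fun c => cov p c (1,1))).card
        ≤ (insert (w1 p) (insert (w2 p) (G.filter (fun c => cov p c (1,1))))).card :=
          Finset.card_le_card hsub
      _ ≤ 2 + (G.filter (fun c => cov p c (1,1))).card := by
          have := Finset.card_insert_le (w1 p) (insert (w2 p) (G.filter (fun c => cov p c (1,1))))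
          have := Finset.card_insert_le (w2 p) (G.filter (fun c => cov p c (1,1)))
          omega
  have hcorner2 : mlt p C (-1, 1) ≤ 1 + (G.filter (fun c => cov p c (-1,1))).card := by
    unfold mlt
    have hsub : C.filter (fun c => cov p c (-1,1)) ⊆
        insert (w1 p) (G.filter (fun c => cov p c (-1,1))) := by
      intro c hc
      obtain ⟨hcC, hccov⟩ := Finset.mem_filter.1 hc
      by_cases he1 : c = w1 p
      · exact Finset.mem_insert.2 (Or.inl he1)
      by_cases he2 : c = w2 p
      · exfalso
        rw [he2] at hccov
        unfold cov at hccov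
        rw [w2] at hccov
        simp only at hccov
        apply h2ne
        linear_combination -hccov
      · refine Finset.mem_insert.2 (Or.inr ?_)
        refine Finset.mem_filter.2 ⟨?_, hccov⟩
        rw [hG]
        exact Finset.mem_erase.2 ⟨he2, Finset.mem_erase.2 ⟨he1, hcC⟩⟩
    calc (C.filter (fun c => cov p c (-1,1))).card
        ≤ (insert (w1 p) (G.filter (fun c => cov p c (-1,1)))).card := Finset.card_le_card hsub
      _ ≤ 1 + (G.filter (fun c => cov p c (-1,1))).card := by
          have := Finset.card_insert_le (w1 p) (G.filter (fun c => cov p c (-1,1)))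
          omega
  have hcorner3 : mlt p C (1, -1) ≤ 1 + (G.filter (fun c => cov p c (1,-1))).card := by
    unfold mlt
    have hsub : C.filter (fun c => cov p c (1,-1)) ⊆
        insert (w2 p) (G.filter (fun c => cov p c (1,-1))) := by
      intro c hc
      obtain ⟨hcC, hccov⟩ := Finset.mem_filter.1 hc
      by_cases he2 : c = w2 p
      · exact Finset.mem_insert.2 (Or.inl he2)
      by_cases he1 : c = w1 p
      · exfalso
        rw [he1] at hccov
        unfold cov at hccov
        rw [w1] at hccov
        simp only at hccov
        apply h2ne
        linear_combination -hccov
      · refine Finset.mem_insert.2 (Or.inr ?_)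
        refine Finset.mem_filter.2 ⟨?_, hccov⟩
        rw [hG]
        exact Finset.mem_erase.2 ⟨he2, Finset.mem_erase.2 ⟨he1, hcC⟩⟩
    calc (C.filter (fun c => cov p c (1,-1))).card
        ≤ (insert (w2 p) (G.filter (fun c => cov p c (1,-1)))).card := Finset.card_le_card hsub
      _ ≤ 1 + (G.filter (fun c => cov p c (1,-1))).card := by
          have := Finset.card_insert_le (w2 p) (G.filter (fun c => cov p c (1,-1)))
          omega
  -- the three corner filters on G are pairwise disjoint
  have hd12 : Disjoint (G.filter (fun c => cov p c (1,1))) (G.filter (fun c => cov p c (-1,1))) := by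
    rw [Finset.disjoint_left]
    intro c hc1 hc2
    obtain ⟨hcG, h1⟩ := Finset.mem_filter.1 hc1
    obtain ⟨-, h2⟩ := Finset.mem_filter.1 hc2
    unfold cov at h1 h2
    apply (hGgen c hcG).1
    have : (2 : ZMod p) * c.1 = 0 := by linear_combination h1 - h2
    rcases mul_eq_zero.1 this with h | h
    · exact absurd h h2ne
    · exact h
  have hd13 : Disjoint (G.filter (fun c => cov p c (1,1))) (G.filter (fun c => cov p c (1,-1))) := by
    rw [Finset.disjoint_left]
    intro c hc1 hc2
    obtain ⟨hcG, h1⟩ := Finset.mem_filter.1 hc1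
    obtain ⟨-, h2⟩ := Finset.mem_filter.1 hc2
    unfold cov at h1 h2
    apply (hGgen c hcG).2.1
    have : (2 : ZMod p) * c.2 = 0 := by linear_combination h1 - h2
    rcases mul_eq_zero.1 this with h | h
    · exact absurd h h2ne
    · exact h
  have hd23 : Disjoint (G.filter (fun c => cov p c (-1,1))) (G.filter (fun c => cov p c (1,-1))) := by
    rw [Finset.disjoint_left]
    intro c hc1 hc2
    obtain ⟨hcG, h1⟩ := Finset.mem_filter.1 hc1
    obtain ⟨-, h2⟩ := Finset.mem_filter.1 hc2
    unfold cov at h1 h2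
    exact h2ne (by linear_combination -h1 - h2)
  have hasum : (G.filter (fun c => cov p c (1,1))).card + (G.filter (fun c => cov p c (-1,1))).card
      + (G.filter (fun c => cov p c (1,-1))).card ≤ G.card := by
    rw [← Finset.card_union_of_disjoint hd12]
    rw [← Finset.card_union_of_disjoint (Finset.disjoint_union_left.2 ⟨hd13, hd23⟩)]
    apply Finset.card_le_card
    apply Finset.union_subset (Finset.union_subset (Finset.filter_subset _ _) (Finset.filter_subset _ _))
      (Finset.filter_subset _ _)
  -- union decomposition
  set U := (FA p ∪ FB p) ∪ DD p with hU
  have hUsub : U ⊆ TT p :=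
    Finset.union_subset (Finset.union_subset (FA_sub p) (FB_sub p)) (DD_sub p)
  have hdecompFB : ∑ z ∈ FB p, mlt p C z = ∑ z ∈ FB p \ FA p, mlt p C z + mlt p C (1,1) := by
    rw [← Finset.sum_inter_add_sum_sdiff (FB p) (FA p) (mlt p C), hint1, Finset.sum_singleton, add_comm]
  have hdecompDD : ∑ z ∈ DD p, mlt p C z
      = ∑ z ∈ DD p \ (FA p ∪ FB p), mlt p C z + (mlt p C (-1,1) + mlt p C (1,-1)) := by
    rw [← Finset.sum_inter_add_sum_sdiff (DD p) (FA p ∪ FB p) (mlt p C), hint2,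
      Finset.sum_pair hne_mm, add_comm]
  have hUAB : FA p ∪ FB p = FA p ∪ (FB p \ FA p) := by
    rw [Finset.union_sdiff_self_eq_union]
  have hUU : U = (FA p ∪ (FB p \ FA p)) ∪ ((DD p) \ (FA p ∪ FB p)) := by
    rw [hU, ← hUAB, Finset.union_sdiff_self_eq_union]
  have hdisj1 : Disjoint (FA p) (FB p \ FA p) := Finset.disjoint_sdiff
  have hdisj2 : Disjoint (FA p ∪ (FB p \ FA p)) (DD p \ (FA p ∪ FB p)) := by
    rw [← hUAB]; exact Finset.disjoint_sdiff
  have hUsum : ∑ z ∈ U, mlt p C z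
      = ∑ z ∈ FA p, mlt p C z + ∑ z ∈ FB p \ FA p, mlt p C z
        + ∑ z ∈ DD p \ (FA p ∪ FB p), mlt p C z := by
    rw [hUU, Finset.sum_union hdisj2, Finset.sum_union hdisj1]
  have hUcard : U.card = (FA p).card + (FB p \ FA p).card + (DD p \ (FA p ∪ FB p)).card := by
    rw [hUU, Finset.card_union_of_disjoint hdisj2, Finset.card_union_of_disjoint hdisj1]
  have hcardFBA : (FB p \ FA p).card + 1 = p := by
    have := Finset.card_inter_add_card_sdiff (FB p) (FA p)
    rw [hint1, Finset.card_singleton, FB_card] at this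
    omega
  have hcardDDU : (DD p \ (FA p ∪ FB p)).card + 2 = p - 1 := by
    have := Finset.card_inter_add_card_sdiff (DD p) (FA p ∪ FB p)
    rw [hint2, DD_card] at this
    rw [Finset.card_pair hne_mm] at this
    omega
  have hsb := surplus_bound p hcov hUsub
  have hTT := two_card_TT p
  have hTTsum : ∑ z ∈ TT p, mlt p C z = ∑ c ∈ C, cap p c := sum_mlt p C (TT p)
  have hFAcard := FA_card p
  have hprod : G.card * (p+3) + 2 * (p+3) = p * (p+3) := by
    rw [← add_mul, hGcard]
  have hexp : p * (p+3) = p*p + 3*p := by ring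
  omega


lemma case_s3 (hw1 : w1 p ∈ C) (hw2 : w2 p ∈ C) (hw3 : w3 p ∈ C) : False := by
  have hcard := card_eq_p p hcov hn
  have h3ne := three_ne p hp5
  have hw2' : w2 p ∈ C.erase (w1 p) := Finset.mem_erase.2 ⟨(w_ne12 p).symm, hw2⟩
  have hw3' : w3 p ∈ (C.erase (w1 p)).erase (w2 p) :=
    Finset.mem_erase.2 ⟨(w_ne23 p).symm, Finset.mem_erase.2 ⟨(w_ne13 p).symm, hw3⟩⟩
  set G := ((C.erase (w1 p)).erase (w2 p)).erase (w3 p) with hG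
  have hGcard : G.card + 3 = p := by
    rw [hG, Finset.card_erase_of_mem hw3', Finset.card_erase_of_mem hw2',
      Finset.card_erase_of_mem hw1, hcard]
    have : 3 ≤ p := by omega
    omega
  have hGmem : ∀ c ∈ G, c ∈ C ∧ c ≠ w1 p ∧ c ≠ w2 p ∧ c ≠ w3 p := by
    intro c hc
    rw [hG] at hc
    have h1 := Finset.mem_erase.1 hc
    have h2 := Finset.mem_erase.1 h1.2
    have h3 := Finset.mem_erase.1 h2.2
    exact ⟨h3.2, h3.1, h2.1, h1.1⟩
  have hGgen : ∀ c ∈ G, c.1 ≠ 0 ∧ c.2 ≠ 0 ∧ c.1 ≠ c.2 := by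
    intro c hcG
    obtain ⟨hc, hne1, hne2, hne3⟩ := hGmem c hcG
    refine ⟨?_, ?_, ?_⟩
    · intro h0; exact hne1 (classA p hcov c hc hn h0)
    · intro h0; exact hne2 (classB p hcov c hc hn h0)
    · intro h0; exact hne3 (classE p hcov c hc hn h0)
  have hsplitC : ∀ f : (ZMod p × ZMod p) → ℕ,
      ∑ c ∈ C, f c = ∑ c ∈ G, f c + f (w3 p) + f (w2 p) + f (w1 p) := by
    intro f
    rw [hG]
    rw [← Finset.sum_erase_add C f hw1, ← Finset.sum_erase_add (C.erase (w1 p)) f hw2',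
      ← Finset.sum_erase_add ((C.erase (w1 p)).erase (w2 p)) f hw3']
  have hw1ne0 : w1 p ≠ 0 := by
    rw [w1]; intro h; exact one_ne_zero (congrArg Prod.snd h)
  have hw2ne0 : w2 p ≠ 0 := by
    rw [w2]; intro h; exact one_ne_zero (congrArg Prod.fst h)
  have hw3ne0 : w3 p ≠ 0 := by
    rw [w3]; intro h
    rw [Prod.ext_iff] at h
    obtain ⟨h1, -⟩ := h
    rw [Prod.fst_zero] at h1
    exact one_ne_zero (by linear_combination -h1)
  have hw1hit : (w1 p).2 ≠ 0 := by rw [w1]; exact one_ne_zero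
  have hw2hit : (w2 p).1 ≠ 0 := by rw [w2]; exact one_ne_zero
  have hw3hit1 : (w3 p).1 ≠ 0 := by
    rw [w3]; exact neg_ne_zero.2 one_ne_zero
  have hw3hit2 : (w3 p).2 ≠ 0 := by
    rw [w3]; exact neg_ne_zero.2 one_ne_zero
  have hw1E : (w1 p).1 ≠ (w1 p).2 := by rw [w1]; exact zero_ne_one
  have hw2E : (w2 p).1 ≠ (w2 p).2 := by rw [w2]; exact one_ne_zero
  have hsupply : 2 * ∑ c ∈ C, cap p c ≤ 6 * p + G.card * (p + 3) := by
    rw [hsplitC (cap p)]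
    have h1 : cap p (w1 p) ≤ p := cap_le_p p hw1ne0
    have h2 : cap p (w2 p) ≤ p := cap_le_p p hw2ne0
    have h3 : cap p (w3 p) ≤ p := cap_le_p p hw3ne0
    have h4 : 2 * ∑ c ∈ G, cap p c ≤ G.card * (p+3) := by
      calc 2 * ∑ c ∈ G, cap p c = ∑ c ∈ G, 2 * cap p c := by rw [Finset.mul_sum]
        _ ≤ ∑ c ∈ G, (p + 3) := Finset.sum_le_sum (fun c hc =>
            cap_generic p (hGgen c hc).1 (hGgen c hc).2.1 (hGgen c hc).2.2)
        _ = G.card * (p+3) := by rw [Finset.sum_const, smul_eq_mul]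
    omega
  -- line sums
  have hSFA : 2 * p - 1 ≤ ∑ z ∈ FA p, mlt p C z := by
    rw [sum_mlt, hsplitC]
    have h1 : ((FA p).filter (fun z => cov p (w1 p) z)).card = p := FA_full p
    have h2 : 1 ≤ ((FA p).filter (fun z => cov p (w2 p) z)).card := FA_hit p hw2hit
    have h3 : 1 ≤ ((FA p).filter (fun z => cov p (w3 p) z)).card := FA_hit p hw3hit1
    have h4 : G.card ≤ ∑ c ∈ G, ((FA p).filter (fun z => cov p c z)).card := by
      rw [Finset.card_eq_sum_ones]
      exact Finset.sum_le_sum (fun c hc => FA_hit p (hGgen c hc).1)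
    omega
  have hSFB : 2 * p - 1 ≤ ∑ z ∈ FB p, mlt p C z := by
    rw [sum_mlt, hsplitC]
    have h1 : ((FB p).filter (fun z => cov p (w2 p) z)).card = p := FB_full p
    have h2 : 1 ≤ ((FB p).filter (fun z => cov p (w1 p) z)).card := FB_hit p hw1hit
    have h3 : 1 ≤ ((FB p).filter (fun z => cov p (w3 p) z)).card := FB_hit p hw3hit2
    have h4 : G.card ≤ ∑ c ∈ G, ((FB p).filter (fun z => cov p c z)).card := by
      rw [Finset.card_eq_sum_ones]
      exact Finset.sum_le_sum (fun c hc => FB_hit p (hGgen c hc).2.1)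
    omega
  have hSFE : 2 * p - 1 ≤ ∑ z ∈ FE p, mlt p C z := by
    rw [sum_mlt, hsplitC]
    have h1 : ((FE p).filter (fun z => cov p (w3 p) z)).card = p := FE_full p
    have h2 : 1 ≤ ((FE p).filter (fun z => cov p (w1 p) z)).card := FE_hit p hw1E
    have h3 : 1 ≤ ((FE p).filter (fun z => cov p (w2 p) z)).card := FE_hit p hw2E
    have h4 : G.card ≤ ∑ c ∈ G, ((FE p).filter (fun z => cov p c z)).card := by
      rw [Finset.card_eq_sum_ones]
      exact Finset.sum_le_sum (fun c hc => FE_hit p (hGgen c hc).2.2)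
    omega
  -- intersections
  have hint1 : FB p ∩ FA p = {((1:ZMod p), (1:ZMod p))} := by
    ext z
    rw [Finset.mem_inter, mem_FB, mem_FA, Finset.mem_singleton, Prod.ext_iff]
  have hint2 : FE p ∩ (FA p ∪ FB p) = {((-2:ZMod p), (1:ZMod p)), ((1:ZMod p), (-2:ZMod p))} := by
    ext z
    rw [Finset.mem_inter, mem_FE, Finset.mem_union, mem_FA, mem_FB,
      Finset.mem_insert, Finset.mem_singleton, Prod.ext_iff, Prod.ext_iff]
    constructor
    · rintro ⟨hz, h | h⟩
      · left
        refine ⟨?_, h⟩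
        rw [h] at hz; linear_combination hz
      · right
        refine ⟨h, ?_⟩
        rw [hz, h]; ring
    · rintro (⟨h1, h2⟩ | ⟨h1, h2⟩)
      · refine ⟨?_, Or.inl h2⟩
        rw [h1, h2]; ring
      · refine ⟨?_, Or.inr h1⟩
        rw [h1, h2]; ring
  have hne_mm : ((-2:ZMod p), (1:ZMod p)) ≠ ((1:ZMod p), (-2:ZMod p)) := by
    intro h
    have := (Prod.ext_iff.1 h).1
    exact h3ne (by linear_combination -this)
  -- corner bounds
  have hcov3_11 : ¬ cov p (w3 p) (1,1) := by
    unfold cov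
    rw [w3]
    intro h
    exact h3ne (by linear_combination -h)
  have hcov2_m21 : ¬ cov p (w2 p) (-2,1) := by
    unfold cov
    rw [w2]
    intro h
    exact h3ne (by linear_combination -h)
  have hcov1_1m2 : ¬ cov p (w1 p) (1,-2) := by
    unfold cov
    rw [w1]
    intro h
    exact h3ne (by linear_combination -h)
  have hcorner : ∀ P : ZMod p × ZMod p, (wa wb : ZMod p × ZMod p) → ¬ cov p wb P →
      (∀ c ∈ C, c ≠ wa → c ≠ wb → cov p c P → c ∈ insert (w1 p) (insert (w2 p) (insert (w3 p) G))) →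
      True := fun _ _ _ _ _ => trivial
  have hcornerBound : ∀ P : ZMod p × ZMod p, (∃ wex, wex ∈ ({w1 p, w2 p, w3 p} : Finset _) ∧ ¬ cov p wex P) →
      mlt p C P ≤ 2 + (G.filter (fun c => cov p c P)).card := by
    intro P ⟨wex, hwexmem, hwexcov⟩
    unfold mlt
    have hsub : C.filter (fun c => cov p c P) ⊆
        insert (w1 p) (insert (w2 p) (insert (w3 p) (G.filter (fun c => cov p c P)))) \ {wex} := by
      intro c hc
      obtain ⟨hcC, hccov⟩ := Finset.mem_filter.1 hc
      rw [Finset.mem_sdiff]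
      constructor
      · by_cases he1 : c = w1 p
        · exact Finset.mem_insert.2 (Or.inl he1)
        by_cases he2 : c = w2 p
        · exact Finset.mem_insert.2 (Or.inr (Finset.mem_insert.2 (Or.inl he2)))
        by_cases he3 : c = w3 p
        · exact Finset.mem_insert.2 (Or.inr (Finset.mem_insert.2 (Or.inr (Finset.mem_insert.2 (Or.inl he3)))))
        · refine Finset.mem_insert.2 (Or.inr (Finset.mem_insert.2 (Or.inr (Finset.mem_insert.2 (Or.inr ?_)))))
          refine Finset.mem_filter.2 ⟨?_, hccov⟩
          rw [hG]
          exact Finset.mem_erase.2 ⟨he3, Finset.mem_erase.2 ⟨he2, Finset.mem_erase.2 ⟨he1, hcC⟩⟩⟩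
      · rw [Finset.mem_singleton]
        intro he
        rw [he] at hccov
        exact hwexcov hccov
    have hwexmem' : wex ∈ insert (w1 p) (insert (w2 p) (insert (w3 p) (G.filter (fun c => cov p c P)))) := by
      simp only [Finset.mem_insert, Finset.mem_singleton] at hwexmem ⊢
      rcases hwexmem with h | h | h
      · exact Or.inl h
      · exact Or.inr (Or.inl h)
      · exact Or.inr (Or.inr (Or.inl h))
    calc (C.filter (fun c => cov p c P)).card
        ≤ (insert (w1 p) (insert (w2 p) (insert (w3 p) (G.filter (fun c => cov p c P)))) \ {wex}).card :=
          Finset.card_le_card hsub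
      _ ≤ 2 + (G.filter (fun c => cov p c P)).card := by
          rw [Finset.card_sdiff_of_subset (Finset.singleton_subset_iff.2 hwexmem'), Finset.card_singleton]
          have i1 := Finset.card_insert_le (w1 p) (insert (w2 p) (insert (w3 p) (G.filter (fun c => cov p c P))))
          have i2 := Finset.card_insert_le (w2 p) (insert (w3 p) (G.filter (fun c => cov p c P)))
          have i3 := Finset.card_insert_le (w3 p) (G.filter (fun c => cov p c P))
          have hpos : 1 ≤ (insert (w1 p) (insert (w2 p) (insert (w3 p) (G.filter (fun c => cov p c P))))).card :=
            Finset.card_pos.2 ⟨wex, hwexmem'⟩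
          omega
  have hcorner1 : mlt p C (1, 1) ≤ 2 + (G.filter (fun c => cov p c (1,1))).card :=
    hcornerBound (1,1) ⟨w3 p, by simp, hcov3_11⟩
  have hcorner2 : mlt p C (-2, 1) ≤ 2 + (G.filter (fun c => cov p c (-2,1))).card :=
    hcornerBound (-2,1) ⟨w2 p, by simp, hcov2_m21⟩
  have hcorner3 : mlt p C (1, -2) ≤ 2 + (G.filter (fun c => cov p c (1,-2))).card :=
    hcornerBound (1,-2) ⟨w1 p, by simp, hcov1_1m2⟩
  -- pairwise disjoint corner filters on G
  have hd12 : Disjoint (G.filter (fun c => cov p c (1,1))) (G.filter (fun c => cov p c (-2,1))) := by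
    rw [Finset.disjoint_left]
    intro c hc1 hc2
    obtain ⟨hcG, h1⟩ := Finset.mem_filter.1 hc1
    obtain ⟨-, h2⟩ := Finset.mem_filter.1 hc2
    unfold cov at h1 h2
    apply (hGgen c hcG).1
    have : (3 : ZMod p) * c.1 = 0 := by linear_combination h1 - h2
    rcases mul_eq_zero.1 this with h | h
    · exact absurd h h3ne
    · exact h
  have hd13 : Disjoint (G.filter (fun c => cov p c (1,1))) (G.filter (fun c => cov p c (1,-2))) := by
    rw [Finset.disjoint_left]
    intro c hc1 hc2
    obtain ⟨hcG, h1⟩ := Finset.mem_filter.1 hc1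
    obtain ⟨-, h2⟩ := Finset.mem_filter.1 hc2
    unfold cov at h1 h2
    apply (hGgen c hcG).2.1
    have : (3 : ZMod p) * c.2 = 0 := by linear_combination h1 - h2
    rcases mul_eq_zero.1 this with h | h
    · exact absurd h h3ne
    · exact h
  have hd23 : Disjoint (G.filter (fun c => cov p c (-2,1))) (G.filter (fun c => cov p c (1,-2))) := by
    rw [Finset.disjoint_left]
    intro c hc1 hc2
    obtain ⟨hcG, h1⟩ := Finset.mem_filter.1 hc1
    obtain ⟨-, h2⟩ := Finset.mem_filter.1 hc2
    unfold cov at h1 h2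
    apply (hGgen c hcG).2.2
    have : (3 : ZMod p) * (c.2 - c.1) = 0 := by linear_combination h1 - h2
    rcases mul_eq_zero.1 this with h | h
    · exact absurd h h3ne
    · linear_combination -h
  have hasum : (G.filter (fun c => cov p c (1,1))).card + (G.filter (fun c => cov p c (-2,1))).card
      + (G.filter (fun c => cov p c (1,-2))).card ≤ G.card := by
    rw [← Finset.card_union_of_disjoint hd12]
    rw [← Finset.card_union_of_disjoint (Finset.disjoint_union_left.2 ⟨hd13, hd23⟩)]
    apply Finset.card_le_card
    apply Finset.union_subset (Finset.union_subset (Finset.filter_subset _ _) (Finset.filter_subset _ _))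
      (Finset.filter_subset _ _)
  -- union decomposition
  set U := (FA p ∪ FB p) ∪ FE p with hU
  have hUsub : U ⊆ TT p :=
    Finset.union_subset (Finset.union_subset (FA_sub p) (FB_sub p)) (FE_sub p)
  have hdecompFB : ∑ z ∈ FB p, mlt p C z = ∑ z ∈ FB p \ FA p, mlt p C z + mlt p C (1,1) := by
    rw [← Finset.sum_inter_add_sum_sdiff (FB p) (FA p) (mlt p C), hint1, Finset.sum_singleton, add_comm]
  have hdecompFE : ∑ z ∈ FE p, mlt p C z
      = ∑ z ∈ FE p \ (FA p ∪ FB p), mlt p C z + (mlt p C (-2,1) + mlt p C (1,-2)) := by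
    rw [← Finset.sum_inter_add_sum_sdiff (FE p) (FA p ∪ FB p) (mlt p C), hint2,
      Finset.sum_pair hne_mm, add_comm]
  have hUAB : FA p ∪ FB p = FA p ∪ (FB p \ FA p) := by
    rw [Finset.union_sdiff_self_eq_union]
  have hUU : U = (FA p ∪ (FB p \ FA p)) ∪ ((FE p) \ (FA p ∪ FB p)) := by
    rw [hU, ← hUAB, Finset.union_sdiff_self_eq_union]
  have hdisj1 : Disjoint (FA p) (FB p \ FA p) := Finset.disjoint_sdiff
  have hdisj2 : Disjoint (FA p ∪ (FB p \ FA p)) (FE p \ (FA p ∪ FB p)) := by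
    rw [← hUAB]; exact Finset.disjoint_sdiff
  have hUsum : ∑ z ∈ U, mlt p C z
      = ∑ z ∈ FA p, mlt p C z + ∑ z ∈ FB p \ FA p, mlt p C z
        + ∑ z ∈ FE p \ (FA p ∪ FB p), mlt p C z := by
    rw [hUU, Finset.sum_union hdisj2, Finset.sum_union hdisj1]
  have hUcard : U.card = (FA p).card + (FB p \ FA p).card + (FE p \ (FA p ∪ FB p)).card := by
    rw [hUU, Finset.card_union_of_disjoint hdisj2, Finset.card_union_of_disjoint hdisj1]
  have hcardFBA : (FB p \ FA p).card + 1 = p := by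
    have := Finset.card_inter_add_card_sdiff (FB p) (FA p)
    rw [hint1, Finset.card_singleton, FB_card] at this
    omega
  have hcardFEU : (FE p \ (FA p ∪ FB p)).card + 2 = p := by
    have := Finset.card_inter_add_card_sdiff (FE p) (FA p ∪ FB p)
    rw [hint2, FE_card] at this
    rw [Finset.card_pair hne_mm] at this
    omega
  have hsb := surplus_bound p hcov hUsub
  have hTT := two_card_TT p
  have hTTsum : ∑ z ∈ TT p, mlt p C z = ∑ c ∈ C, cap p c := sum_mlt p C (TT p)
  have hFAcard := FA_card p
  have hprod : G.card * (p+3) + 3 * (p+3) = p * (p+3) := by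
    rw [← add_mul, hGcard]
  have hexp : p * (p+3) = p*p + 3*p := by ring
  omega

end Cases


-- ============ symmetry transforms ============

def Sd (c : ZMod p × ZMod p) : ZMod p × ZMod p := (c.2, c.1)
def Md (c : ZMod p × ZMod p) : ZMod p × ZMod p := (-c.1, c.2 - c.1)

lemma Sd_invol (c : ZMod p × ZMod p) : Sd p (Sd p c) = c := rfl

lemma Md_invol (c : ZMod p × ZMod p) : Md p (Md p c) = c := by
  rw [Md, Md]
  apply Prod.ext <;> simp <;> ring

lemma Sd_inj : Function.Injective (Sd p) := by
  intro a b h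
  rw [← Sd_invol p a, ← Sd_invol p b, h]

lemma Md_inj : Function.Injective (Md p) := by
  intro a b h
  rw [← Md_invol p a, ← Md_invol p b, h]

lemma mem_image_Sd {C : Finset (ZMod p × ZMod p)} {w : ZMod p × ZMod p} :
    w ∈ C.image (Sd p) ↔ Sd p w ∈ C := by
  constructor
  · intro h
    obtain ⟨a, ha, rfl⟩ := Finset.mem_image.1 h
    rwa [Sd_invol]
  · intro h
    exact Finset.mem_image.2 ⟨Sd p w, h, Sd_invol p w⟩

lemma mem_image_Md {C : Finset (ZMod p × ZMod p)} {w : ZMod p × ZMod p} :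
    w ∈ C.image (Md p) ↔ Md p w ∈ C := by
  constructor
  · intro h
    obtain ⟨a, ha, rfl⟩ := Finset.mem_image.1 h
    rwa [Md_invol]
  · intro h
    exact Finset.mem_image.2 ⟨Md p w, h, Md_invol p w⟩

lemma add_eq_zero_of_val {z1 z2 : ZMod p} (h : z1.val + z2.val = p) : z1 + z2 = 0 := by
  have : ((z1.val + z2.val : ℕ) : ZMod p) = ((p : ℕ) : ZMod p) := by rw [h]
  push_cast at this
  rw [ZMod.natCast_val, ZMod.natCast_val, ZMod.cast_id, ZMod.cast_id] at this
  simpa using this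

lemma swap_mem_TT {z : ZMod p × ZMod p} (h : z ∈ TT p) : ((z.2, z.1) : ZMod p × ZMod p) ∈ TT p := by
  rw [mem_TT] at h ⊢
  dsimp only
  constructor
  · omega
  · intro h0
    apply h.2
    rw [Prod.ext_iff] at h0 ⊢
    dsimp only at h0
    simp only [Prod.fst_zero, Prod.snd_zero] at h0 ⊢
    exact ⟨h0.2, h0.1⟩

lemma NM_mem_TT {z : ZMod p × ZMod p} (h : z ∈ TT p) :
    ((-z.1 - z.2, z.2) : ZMod p × ZMod p) ∈ TT p := by
  rw [mem_TT] at h ⊢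
  obtain ⟨hval, hne⟩ := h
  dsimp only
  by_cases hs : z.1 + z.2 = 0
  · have h1 : -z.1 - z.2 = 0 := by linear_combination -hs
    rw [h1, ZMod.val_zero]
    constructor
    · have := ZMod.val_lt z.2; omega
    · intro h0
      apply hne
      rw [Prod.ext_iff] at h0
      dsimp only at h0
      have hz2 : z.2 = 0 := h0.2
      have hz1 : z.1 = 0 := by rw [hz2, add_zero] at hs; exact hs
      exact Prod.ext hz1 hz2
  · have hlt : z.1.val + z.2.val < p := by
      rcases Nat.lt_or_ge (z.1.val + z.2.val) p with h | h
      · exact h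
      · exfalso
        exact hs (add_eq_zero_of_val p (by omega))
    have h2 : -z.1 - z.2 = -(z.1 + z.2) := by ring
    have h3 : (z.1 + z.2).val = z.1.val + z.2.val := ZMod.val_add_of_lt hlt
    rw [h2, val_neg' p hs, h3]
    constructor
    · omega
    · intro h0
      rw [Prod.ext_iff] at h0
      dsimp only at h0
      simp only [Prod.fst_zero] at h0
      have h4 : -(z.1 + z.2) = 0 := h0.1
      rw [neg_eq_zero] at h4
      exact hs h4

lemma cover_Sd {C : Finset (ZMod p × ZMod p)}
    (hcov : ∀ z ∈ TT p, ∃ c ∈ C, cov p c z) :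
    ∀ z ∈ TT p, ∃ c ∈ C.image (Sd p), cov p c z := by
  intro z hz
  obtain ⟨c, hc, hcz⟩ := hcov (z.2, z.1) (swap_mem_TT p hz)
  refine ⟨Sd p c, Finset.mem_image.2 ⟨c, hc, rfl⟩, ?_⟩
  unfold cov at hcz ⊢
  rw [Sd]
  dsimp only at hcz ⊢
  linear_combination hcz

lemma cover_Md {C : Finset (ZMod p × ZMod p)}
    (hcov : ∀ z ∈ TT p, ∃ c ∈ C, cov p c z) :
    ∀ z ∈ TT p, ∃ c ∈ C.image (Md p), cov p c z := by
  intro z hz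
  obtain ⟨c, hc, hcz⟩ := hcov (-z.1 - z.2, z.2) (NM_mem_TT p hz)
  refine ⟨Md p c, Finset.mem_image.2 ⟨c, hc, rfl⟩, ?_⟩
  unfold cov at hcz ⊢
  rw [Md]
  dsimp only at hcz ⊢
  linear_combination hcz

lemma Sd_w1 : Sd p (w1 p) = w2 p := rfl
lemma Sd_w2 : Sd p (w2 p) = w1 p := rfl
lemma Sd_w3 : Sd p (w3 p) = w3 p := rfl
lemma Md_w1 : Md p (w1 p) = w1 p := by
  rw [Md, w1]; apply Prod.ext <;> simp
lemma Md_w2 : Md p (w2 p) = w3 p := by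
  rw [Md, w2, w3]; apply Prod.ext <;> simp
lemma Md_w3 : Md p (w3 p) = w2 p := by
  rw [Md, w3, w2]; apply Prod.ext <;> simp

-- ============ main theorem (2-dim) ============

theorem main2 (hp5 : 5 ≤ p) (C : Finset (ZMod p × ZMod p))
    (hcov : ∀ z ∈ TT p, ∃ c ∈ C, cov p c z) : p + 1 ≤ C.card := by
  by_contra hcon
  push_neg at hcon
  have hn : C.card ≤ p := by omega
  -- transformed covers
  set C1 := C.image (Sd p) with hC1          -- swaps Q1 Q2
  set C2 := C.image (Md p) with hC2          -- swaps Q2 Q3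
  set C3 := C1.image (Md p) with hC3         -- Sd then Md
  set C4 := C2.image (Sd p) with hC4         -- Md then Sd
  have hcov1 := cover_Sd p hcov
  have hcov2 := cover_Md p hcov
  have hcov3 := cover_Md p hcov1
  have hcov4 := cover_Sd p hcov2
  have hn1 : C1.card ≤ p := by rw [hC1, Finset.card_image_of_injective _ (Sd_inj p)]; exact hn
  have hn2 : C2.card ≤ p := by rw [hC2, Finset.card_image_of_injective _ (Md_inj p)]; exact hn
  have hn3 : C3.card ≤ p := by rw [hC3, Finset.card_image_of_injective _ (Md_inj p)]; exact hn1
  have hn4 : C4.card ≤ p := by rw [hC4, Finset.card_image_of_injective _ (Sd_inj p)]; exact hn2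
  -- membership characterizations
  have m1_1 : w1 p ∈ C1 ↔ w2 p ∈ C := by rw [hC1, mem_image_Sd, Sd_w1]
  have m1_2 : w2 p ∈ C1 ↔ w1 p ∈ C := by rw [hC1, mem_image_Sd, Sd_w2]
  have m1_3 : w3 p ∈ C1 ↔ w3 p ∈ C := by rw [hC1, mem_image_Sd, Sd_w3]
  have m2_1 : w1 p ∈ C2 ↔ w1 p ∈ C := by rw [hC2, mem_image_Md, Md_w1]
  have m2_2 : w2 p ∈ C2 ↔ w3 p ∈ C := by rw [hC2, mem_image_Md, Md_w2]
  have m2_3 : w3 p ∈ C2 ↔ w2 p ∈ C := by rw [hC2, mem_image_Md, Md_w3]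
  have m3_1 : w1 p ∈ C3 ↔ w2 p ∈ C := by rw [hC3, mem_image_Md, Md_w1, m1_1]
  have m3_2 : w2 p ∈ C3 ↔ w3 p ∈ C := by rw [hC3, mem_image_Md, Md_w2, m1_3]
  have m3_3 : w3 p ∈ C3 ↔ w1 p ∈ C := by rw [hC3, mem_image_Md, Md_w3, m1_2]
  have m4_1 : w1 p ∈ C4 ↔ w3 p ∈ C := by rw [hC4, mem_image_Sd, Sd_w1, m2_2]
  have m4_2 : w2 p ∈ C4 ↔ w1 p ∈ C := by rw [hC4, mem_image_Sd, Sd_w2, m2_1]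
  have m4_3 : w3 p ∈ C4 ↔ w2 p ∈ C := by rw [hC4, mem_image_Sd, Sd_w3, m2_3]
  by_cases h1 : w1 p ∈ C <;> by_cases h2 : w2 p ∈ C <;> by_cases h3 : w3 p ∈ C
  · exact case_s3 p hp5 hcov hn h1 h2 h3
  · exact case_s2 p hp5 hcov hn h1 h2 h3
  · -- (T,F,T) : use C2 : (T,T,F)
    exact case_s2 p hp5 hcov2 hn2 (m2_1.2 h1) (m2_2.2 h3) (fun hx => h2 (m2_3.1 hx))
  · exact case_s1 p hp5 hcov hn h1 h2 h3
  · -- (F,T,T) : use C3 : (T,T,F)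
    exact case_s2 p hp5 hcov3 hn3 (m3_1.2 h2) (m3_2.2 h3) (fun hx => h1 (m3_3.1 hx))
  · -- (F,T,F) : use C1 : (T,F,F)
    exact case_s1 p hp5 hcov1 hn1 (m1_1.2 h2) (fun hx => h1 (m1_2.1 hx)) (fun hx => h3 (m1_3.1 hx))
  · -- (F,F,T) : use C4 : (T,F,F)
    exact case_s1 p hp5 hcov4 hn4 (m4_1.2 h3) (fun hx => h1 (m4_2.1 hx)) (fun hx => h2 (m4_3.1 hx))
  · exact case_s0 p hp5 hcov hn h1 h2 h3

end Stmt6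

theorem stmt_6 (p M : ℕ) [Fact p.Prime] (hp5 : 5 ≤ p) (hM : 2 ≤ M)
    (L : Finset (Set (Fin M → ZMod p)))
    (hhyp : ∀ S ∈ L, ∃ (c : Fin M → ZMod p) (b : ZMod p), c ≠ 0 ∧ b ≠ 0 ∧
      S = {z | ∑ j, c j * z j = b})
    (hcover : ∀ z : Fin M → ZMod p, (∑ j, (z j).val) ≤ p → z ≠ 0 →
      ∃ S ∈ L, z ∈ S) :
    p + 1 ≤ L.card := by
  classical
  have hM0 : 0 < M := by omega
  have hM1 : 1 < M := by omega
  set j0 : Fin M := ⟨0, hM0⟩ with hj0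
  set j1 : Fin M := ⟨1, hM1⟩ with hj1
  have hjne : j0 ≠ j1 := by
    rw [hj0, hj1]
    intro h
    exact absurd (Fin.mk.injEq _ _ _ _ ▸ h) (by simp)
  -- choose hyperplane data
  have hchoice : ∀ S : {x // x ∈ L}, ∃ (c : Fin M → ZMod p) (b : ZMod p), c ≠ 0 ∧ b ≠ 0 ∧
      S.1 = {z | ∑ j, c j * z j = b} := fun S => hhyp S.1 S.2
  choose cS bS hc0 hb0 hSeq using hchoice
  set dual : {x // x ∈ L} → ZMod p × ZMod p :=
    fun S => (cS S j0 * (bS S)⁻¹, cS S j1 * (bS S)⁻¹) with hdual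
  set C : Finset (ZMod p × ZMod p) := L.attach.image dual with hC
  have hcov : ∀ z ∈ Stmt6.TT p, ∃ c ∈ C, Stmt6.cov p c z := by
    intro z hz
    rw [Stmt6.mem_TT] at hz
    obtain ⟨hval, hzne⟩ := hz
    set w : Fin M → ZMod p := fun j => if j = j0 then z.1 else if j = j1 then z.2 else 0 with hw
    have hwj0 : w j0 = z.1 := by rw [hw]; simp
    have hwj1 : w j1 = z.2 := by
      rw [hw]; simp [Ne.symm hjne]
    have hwo : ∀ j : Fin M, j ≠ j0 → j ≠ j1 → w j = 0 := by
      intro j hj0' hj1'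
      rw [hw]; simp only [if_neg hj0', if_neg hj1']
    have hsumval : (∑ j, (w j).val) ≤ p := by
      have : ∑ j, (w j).val = (w j0).val + (w j1).val := by
        apply Finset.sum_eq_add j0 j1 hjne
        · intro j _ hj
          rw [hwo j hj.1 hj.2, ZMod.val_zero]
        · intro h; exact absurd (Finset.mem_univ j0) h
        · intro h; exact absurd (Finset.mem_univ j1) h
      rw [this, hwj0, hwj1]
      exact hval
    have hwne : w ≠ 0 := by
      intro h
      apply hzne
      have h1 : w j0 = 0 := by rw [h]; rfl
      have h2 : w j1 = 0 := by rw [h]; rfl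
      rw [hwj0] at h1
      rw [hwj1] at h2
      exact Prod.ext h1 h2
    obtain ⟨S, hSL, hzS⟩ := hcover w hsumval hwne
    set Ss : {x // x ∈ L} := ⟨S, hSL⟩ with hSs
    have hzS' : w ∈ {z | ∑ j, cS Ss j * z j = bS Ss} := by
      rw [← hSeq Ss]
      exact hzS
    have heq : ∑ j, cS Ss j * w j = bS Ss := hzS'
    have heq2 : cS Ss j0 * z.1 + cS Ss j1 * z.2 = bS Ss := by
      have : ∑ j, cS Ss j * w j = cS Ss j0 * w j0 + cS Ss j1 * w j1 := by
        apply Finset.sum_eq_add j0 j1 hjne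
        · intro j _ hj
          rw [hwo j hj.1 hj.2, mul_zero]
        · intro h; exact absurd (Finset.mem_univ j0) h
        · intro h; exact absurd (Finset.mem_univ j1) h
      rw [this, hwj0, hwj1] at heq
      exact heq
    refine ⟨dual Ss, Finset.mem_image.2 ⟨Ss, Finset.mem_attach _ _, rfl⟩, ?_⟩
    unfold Stmt6.cov
    rw [hdual]
    dsimp only
    have hb := hb0 Ss
    field_simp
    linear_combination heq2
  have hmain := Stmt6.main2 p hp5 C hcov
  calc p + 1 ≤ C.card := hmain
    _ ≤ L.attach.card := Finset.card_image_le
    _ = L.card := Finset.card_attach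
end

section
/- Suppose non-zero affine hyperplanes $H_1, \ldots, H_m$ in $\mathbb{F}_p^M$ (with $M \geq 2$, none containing the origin) cover $S_{p+1,M} \setminus \{0^M\}$. Then none of the $H_j$ equals the coordinate subspace $\{z \in \mathbb{F}_p^M : z_M = 0\}$, and the intersections $H_j \cap \{z_M = 0\}$ are each either empty or contained in a non-zero affine hyperplane of the subspace $\{z_M = 0\} \cong \mathbb{F}_p^{M-1}$, and the nonempty ones cover $(S_{p+1,M} \cap \{z_M = 0\}) \setminus \{0^M\}$, which equals $S_{p+1,M-1} \setminus \{0^{M-1}\}$ under the natural identification. -/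
theorem stmt_7 (p M : ℕ) [Fact p.Prime] (hM : 2 ≤ M)
    (L : Finset (Set (Fin M → ZMod p)))
    (hhyp : ∀ S ∈ L, ∃ (c : Fin M → ZMod p) (b : ZMod p), c ≠ 0 ∧ b ≠ 0 ∧
      S = {z | ∑ j, c j * z j = b})
    (hcover : ∀ z : Fin M → ZMod p, (∑ j, (z j).val) ≤ p → z ≠ 0 →
      ∃ S ∈ L, z ∈ S) :
    (∀ S ∈ L, S ≠ {z | z ⟨M - 1, by omega⟩ = 0}) ∧
    (∀ S ∈ L, (S ∩ {z | z ⟨M - 1, by omega⟩ = 0} = ∅) ∨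
      ∃ (c' : Fin (M - 1) → ZMod p) (b' : ZMod p), c' ≠ 0 ∧ b' ≠ 0 ∧
        S ∩ {z | z ⟨M - 1, by omega⟩ = 0} ⊆
          {z | z ⟨M - 1, by omega⟩ = 0 ∧
            ∑ j : Fin (M - 1), c' j * z ⟨j.val, by omega⟩ = b'}) ∧
    (∀ w : Fin (M - 1) → ZMod p, (∑ j, (w j).val) ≤ p → w ≠ 0 →
      ∃ S ∈ L, (fun j : Fin M =>
        if h : j.val < M - 1 then w ⟨j.val, h⟩ else 0) ∈ S) := by
  obtain ⟨n, rfl⟩ : ∃ n, M = n + 1 := ⟨M - 1, by omega⟩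
  have hlast : (⟨n + 1 - 1, by omega⟩ : Fin (n + 1)) = Fin.last n := rfl
  refine ⟨?_, ?_, ?_⟩
  · intro S hS hEq
    obtain ⟨c, b, hc, hb, rfl⟩ := hhyp S hS
    have h0 : (0 : Fin (n + 1) → ZMod p) ∈
        {z : Fin (n + 1) → ZMod p | z ⟨n + 1 - 1, by omega⟩ = 0} := rfl
    rw [← hEq] at h0
    simp only [Set.mem_setOf_eq, Pi.zero_apply, mul_zero, Finset.sum_const_zero] at h0
    exact hb h0.symm
  · intro S hS
    obtain ⟨c, b, hc, hb, rfl⟩ := hhyp S hS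
    by_cases hc' : (fun i : Fin n => c i.castSucc) = 0
    · left
      ext z
      simp only [Set.mem_inter_iff, Set.mem_setOf_eq, Set.mem_empty_iff_false, iff_false,
        not_and]
      intro hz1 hz2
      rw [Fin.sum_univ_castSucc] at hz1
      have hce : ∀ i : Fin n, c i.castSucc = 0 := fun i => congrFun hc' i
      rw [hlast] at hz2
      simp [hce, hz2] at hz1
      exact hb hz1.symm
    · right
      refine ⟨fun i => c i.castSucc, b, hc', hb, ?_⟩
      rintro z ⟨hz1, hz2⟩
      refine ⟨hz2, ?_⟩
      simp only [Set.mem_setOf_eq] at hz1 hz2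
      rw [hlast] at hz2
      rw [Fin.sum_univ_castSucc, hz2, mul_zero, add_zero] at hz1
      exact hz1
  · intro w hw hw0
    set z : Fin (n + 1) → ZMod p :=
      fun j => if h : j.val < n + 1 - 1 then w ⟨j.val, h⟩ else 0 with hzdef
    have hzc : ∀ i : Fin n, z i.castSucc = w i := by
      intro i
      simp only [hzdef, Fin.coe_castSucc]
      rw [dif_pos (by omega : i.val < n + 1 - 1)]
      exact congrArg w (Fin.ext rfl)
    have hzl : z (Fin.last n) = 0 := by
      simp [hzdef]
    have hsum : (∑ j, (z j).val) ≤ p := by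
      rw [Fin.sum_univ_castSucc]
      simp only [hzl, ZMod.val_zero, add_zero]
      calc ∑ i : Fin n, (z i.castSucc).val = ∑ i : Fin n, (w i).val := by
            exact Finset.sum_congr rfl fun i _ => by rw [hzc i]
        _ ≤ p := hw
    have hz0 : z ≠ 0 := by
      intro h
      apply hw0
      funext i
      have := congrFun h i.castSucc
      rwa [hzc i] at this
    exact hcover z hsum hz0
end

section
/- Let $p$ be a prime, $M \geq 1$, $k \in [M(p-1)+1]$, and fix $w \in [0,p-1]^M$ with $w_1 + \cdots + w_M = k-1$ and $w_1 > 0$. Define $P : \mathbb{F}_p^M \to \mathbb{F}_p$ by $P(x) = \binom{|x_1|_p}{w_1 - 1}\binom{|x_2|_p}{w_2}\cdots\binom{|x_M|_p}{w_M} \bmod p$, where $|x_i|_p \in [0,p-1]$ is the integer representative of $x_i$. Then for all $x, h_1, \ldots, h_{k-2} \in \mathbb{F}_p^M$ with $h_1 = \cdots = h_{w_1 - 1} = e_1$, $h_{w_1} = \cdots = h_{w_1 + w_2 - 1} = e_2$, \ldots, $h_{k - w_M - 1} = \cdots = h_{k-2} = e_M$ (where $e_j$ is the $j$-th standard basis vector),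 the iterated difference $\nabla_{h_1} \cdots \nabla_{h_{k-2}} P(x)$ equals $1$ in $\mathbb{F}_p$. -/
/-- Difference operator `∇_h f (x) = f (x + h) - f x`. -/
def diffOp {G R : Type*} [Add G] [Sub R] (h : G) (f : G → R) : G → R :=
  fun x => f (x + h) - f x


lemma step_lemma (p : ℕ) [Fact p.Prime] (x : ZMod p) (m : ℕ) (hm : 1 ≤ m) (hmp : m ≤ p - 1) :
    (((x + 1).val.choose m : ℕ) : ZMod p) =
      ((x.val.choose m : ℕ) : ZMod p) + ((x.val.choose (m-1) : ℕ) : ZMod p) := by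
  have hp : p.Prime := Fact.out
  haveI : NeZero p := ⟨hp.ne_zero⟩
  have hxlt : x.val < p := x.val_lt
  obtain ⟨m', rfl⟩ : ∃ m', m = m' + 1 := ⟨m - 1, by omega⟩
  rcases lt_or_eq_of_le (Nat.succ_le_of_lt hxlt) with h | h
  · -- x.val + 1 < p
    have h1 : ((x + 1).val) = x.val + 1 := by
      have : x.val + (1 : ZMod p).val < p := by
        rw [ZMod.val_one]; omega
      rw [ZMod.val_add_of_lt this, ZMod.val_one]
    rw [h1, Nat.choose_succ_succ]
    push_cast
    ring
  · -- x.val + 1 = p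
    have hx1 : x + 1 = 0 := by
      have hvx : ((x.val : ℕ) : ZMod p) = x := by rw [ZMod.natCast_val, ZMod.cast_id]
      rw [← hvx, ← Nat.cast_one, ← Nat.cast_add, show x.val + 1 = p from h, ZMod.natCast_self]
    rw [hx1]
    have hxv : x.val = p - 1 := by omega
    rw [hxv, ZMod.val_zero, Nat.choose_eq_zero_of_lt (by omega)]
    have hchoose : p.choose (m' + 1) = (p-1).choose m' + (p-1).choose (m'+1) := by
      conv_lhs => rw [show p = (p - 1) + 1 by omega]
      rw [Nat.choose_succ_succ]
    have hdvd : (p : ℕ) ∣ p.choose (m' + 1) := hp.dvd_choose_self (by omega) (by omega)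
    have : ((p.choose (m'+1) : ℕ) : ZMod p) = 0 := by
      exact_mod_cast (ZMod.natCast_eq_zero_iff _ _).mpr hdvd
    rw [hchoose] at this
    push_cast at this ⊢
    linear_combination -this

lemma block_fold (p M : ℕ) [Fact p.Prime] (j : Fin M) (m c : ℕ) (hm : m ≤ c) (hc : c ≤ p - 1)
    (r : (Fin M → ZMod p) → ZMod p)
    (hr : ∀ x : Fin M → ZMod p, r (x + fun t => if t = j then 1 else 0) = r x) :
    ((List.replicate m (fun t => if t = j then (1:ZMod p) else 0)).foldr diffOp
      (fun x => (((x j).val.choose c : ℕ) : ZMod p) * r x)) =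
      fun x => (((x j).val.choose (c - m) : ℕ) : ZMod p) * r x := by
  induction m with
  | zero => simp
  | succ n ih =>
    rw [List.replicate_succ, List.foldr_cons, ih (by omega)]
    funext x
    simp only [diffOp]
    have hxj : ((x + fun t => if t = j then (1:ZMod p) else 0) j) = x j + 1 := by simp
    rw [hr, hxj, step_lemma p (x j) (c - n) (by omega) (by omega),
      show c - n - 1 = c - (n+1) by omega]
    ring

lemma multi_fold (p M : ℕ) [Fact p.Prime] (v : Fin M → ℕ) (hv : ∀ j, v j ≤ p - 1)
    (l : List (Fin M)) (hl : l.Nodup) :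
    ((l.flatMap (fun j => List.replicate (v j) (fun t => if t = j then (1:ZMod p) else 0))).foldr
      diffOp (fun x => ∏ j, (((x j).val.choose (v j) : ℕ) : ZMod p))) =
      fun x => ∏ j, (((x j).val.choose (if j ∈ l then 0 else v j) : ℕ) : ZMod p) := by
  induction l with
  | nil => simp
  | cons a l ih =>
    rw [List.flatMap_cons, List.foldr_append, ih (List.nodup_cons.mp hl).2]
    have ha : a ∉ l := (List.nodup_cons.mp hl).1
    have hre : (fun x : Fin M → ZMod p =>
        ∏ j, (((x j).val.choose (if j ∈ l then 0 else v j) : ℕ) : ZMod p))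
        = fun x => (((x a).val.choose (v a) : ℕ) : ZMod p) *
            ∏ j ∈ Finset.univ.erase a, (((x j).val.choose (if j ∈ l then 0 else v j) : ℕ) : ZMod p) := by
      funext x
      rw [← Finset.mul_prod_erase Finset.univ _ (Finset.mem_univ a)]
      simp [ha]
    rw [hre, block_fold p M a (v a) (v a) le_rfl (hv a) _ ?_]
    · funext x
      rw [Nat.sub_self]
      rw [← Finset.mul_prod_erase Finset.univ
        (fun j => (((x j).val.choose (if j ∈ a :: l then 0 else v j) : ℕ) : ZMod p))
        (Finset.mem_univ a)]
      simp only [List.mem_cons, true_or, if_true]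
      congr 1
      refine Finset.prod_congr rfl fun i hi => ?_
      have hia : i ≠ a := (Finset.mem_erase.mp hi).1
      congr 2
      simp [hia]
    · intro x
      refine Finset.prod_congr rfl fun i hi => ?_
      have hia : i ≠ a := (Finset.mem_erase.mp hi).1
      congr 2
      simp [hia]

theorem stmt_11 (p M k : ℕ) [Fact p.Prime] (hM : 0 < M)
    (hk : k ≤ M * (p - 1) + 1)
    (w : Fin M → ℕ) (hw : ∀ j, w j ≤ p - 1)
    (hsum : ∑ j, w j = k - 1) (hw1 : 0 < w ⟨0, hM⟩)
    (P : (Fin M → ZMod p) → ZMod p)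
    (hP : ∀ x, P x = ∏ j : Fin M,
      ((Nat.choose (x j).val
        (if j = (⟨0, hM⟩ : Fin M) then w ⟨0, hM⟩ - 1 else w j) : ℕ) : ZMod p))
    -- the sequence of difference directions: `e₁` repeated `w₁ - 1` times, then
    -- `e_j` repeated `w_j` times for each `j ≥ 2` (in order); its length is `k - 2`.
    (H : List (Fin M → ZMod p))
    (hH : H = (List.finRange M).flatMap (fun j =>
      List.replicate (if j = (⟨0, hM⟩ : Fin M) then w ⟨0, hM⟩ - 1 else w j)
        (fun t => if t = j then (1 : ZMod p) else 0))) :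
    ∀ x, (H.foldr diffOp P) x = 1 := by
  intro x
  set v : Fin M → ℕ := fun j => if j = (⟨0, hM⟩ : Fin M) then w ⟨0, hM⟩ - 1 else w j with hv
  have hvle : ∀ j, v j ≤ p - 1 := by
    intro j
    have h1 := hw j
    have h2 := hw (⟨0, hM⟩ : Fin M)
    by_cases h : j = (⟨0, hM⟩ : Fin M) <;> simp only [hv, h, if_true, if_false] <;> omega
  have hPeq : P = fun x => ∏ j, (((x j).val.choose (v j) : ℕ) : ZMod p) := by
    funext y; rw [hP y]
  rw [hH, hPeq, multi_fold p M v hvle (List.finRange M) (List.nodup_finRange M)]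
  simp [List.mem_finRange]
end

section
/- Let $p$ be a prime and $M \geq 1$, and consider the system $\Phi_{k,M}$ of linear forms $\phi_z(x, t_1, \ldots, t_M) = x + z_1 t_1 + \cdots + z_M t_M$ indexed by $z \in S_{k,M}$, where $S_{k,M} = \{z \in [0,p-1]^M : z_1 + \cdots + z_M < k\}$ (sum in $\mathbb{Z}$) and $3 \leq k \leq \min(p, M(p-1)+1)$. Then for each $z \in S_{k,M}$, the set $S_{k,M} \setminus \{z\}$ can be covered by $k-1$ affine hyperplanes of $\mathbb{F}_p^M$ each avoiding $z$; in particular, $\Phi_{k,M}$ has Cauchy-Schwarz complexity at most $k-2$. -/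
private lemma cast_val_eq {p : ℕ} [Fact p.Prime] (a : ZMod p) :
    ((a.val : ℕ) : ZMod p) = a := by
  simp [ZMod.natCast_val, ZMod.cast_id]

private lemma cov (p M : ℕ) [Fact p.Prime] (hM : 1 ≤ M) :
    ∀ k : ℕ, k ≤ p → ∀ z : Fin M → ZMod p, (∑ j, (z j).val) < k →
    ∃ L : List ((Fin M → ZMod p) × ZMod p), L.length ≤ k - 1 ∧
      (∀ q ∈ L, q.1 ≠ 0 ∧ (∑ j, q.1 j * z j) ≠ q.2) ∧
      (∀ y : Fin M → ZMod p, (∑ j, (y j).val) < k → y ≠ z →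
        ∃ q ∈ L, (∑ j, q.1 j * y j) = q.2) := by
  have hp : 0 < p := (Fact.out : p.Prime).pos
  intro k
  induction k using Nat.strong_induction_on with
  | _ k ih =>
    intro hkp z hz
    by_cases hz0 : z = 0
    · subst hz0
      refine ⟨(List.range (k-1)).map (fun d => ((fun _ => 1), ((d+1 : ℕ) : ZMod p))), ?_, ?_, ?_⟩
      · simp
      · intro q hq
        simp only [List.mem_map, List.mem_range] at hq
        obtain ⟨d, hd, rfl⟩ := hq
        constructor
        · intro h
          have h1 := congrFun h ⟨0, hM⟩
          rw [Pi.zero_apply] at h1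
          exact one_ne_zero h1
        · simp only [Pi.zero_apply, mul_zero, Finset.sum_const_zero]
          intro h
          have h2 : ((d+1 : ℕ) : ZMod p) = 0 := h.symm
          rw [ZMod.natCast_eq_zero_iff] at h2
          have h3 := Nat.le_of_dvd (Nat.succ_pos d) h2
          omega
      · intro y hy hy0
        have hy1 : 1 ≤ ∑ j, (y j).val := by
          obtain ⟨j, hj⟩ := Function.ne_iff.mp hy0
          have h1 : 1 ≤ (y j).val := ZMod.val_pos.mpr (by simpa using hj)
          have h2 : (y j).val ≤ ∑ j, (y j).val :=
            Finset.single_le_sum (f := fun j => (y j).val)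
              (fun _ _ => Nat.zero_le _) (Finset.mem_univ j)
          omega
        refine ⟨((fun _ => 1), (((∑ j, (y j).val - 1) + 1 : ℕ) : ZMod p)), ?_, ?_⟩
        · simp only [List.mem_map, List.mem_range]
          exact ⟨∑ j, (y j).val - 1, by omega, rfl⟩
        · simp only [one_mul]
          have h4 : ((∑ j, (y j).val - 1) + 1) = ∑ j, (y j).val := by omega
          rw [h4, Nat.cast_sum]
          exact Finset.sum_congr rfl (fun j _ => (cast_val_eq (y j)).symm)
    · -- z ≠ 0
      obtain ⟨j0, hj0⟩ := Function.ne_iff.mp hz0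
      have hj0' : z j0 ≠ 0 := by simpa using hj0
      set m1 := (z j0).val with hm1def
      have hcastm1 : ((m1 : ℕ) : ZMod p) = z j0 := cast_val_eq (z j0)
      have hm1 : 1 ≤ m1 := ZMod.val_pos.mpr hj0'
      have hm1p : m1 < p := ZMod.val_lt (z j0)
      have hm1le : m1 ≤ ∑ j, (z j).val :=
        Finset.single_le_sum (f := fun j => (z j).val) (fun _ _ => Nat.zero_le _)
          (Finset.mem_univ j0)
      set z' := Function.update z j0 0 with hz'def
      have hsz' : ∑ j, (z' j).val = (∑ j, (z j).val) - m1 := by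
        have hup : (fun j => (z' j).val) = Function.update (fun j => (z j).val) j0 0 := by
          funext j
          by_cases h : j = j0
          · subst h; simp [hz'def]
          · simp [hz'def, Function.update_of_ne h]
        have h1 : ∑ j, (z' j).val = 0 + ∑ j ∈ Finset.univ \ {j0}, (z j).val := by
          rw [hup]; exact Finset.sum_update_of_mem (Finset.mem_univ j0) _ _
        have h2 : ∑ j, (z j).val = (z j0).val + ∑ j ∈ Finset.univ \ {j0}, (z j).val := by
          have := Finset.sum_update_of_mem (Finset.mem_univ j0) (fun j => (z j).val) ((z j0).val)
          simpa [Function.update_eq_self] using this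
        omega
      obtain ⟨L', hlen', havoid', hcov'⟩ := ih (k - m1) (by omega) (by omega) z' (by omega)
      set e0 : Fin M → ZMod p := Pi.single j0 1 with he0
      have hsume0 : ∀ w : Fin M → ZMod p, (∑ j, e0 j * w j) = w j0 := by
        intro w
        rw [Finset.sum_eq_single j0]
        · simp [he0]
        · intro j _ hj; simp [he0, Pi.single_eq_of_ne hj]
        · intro h; exact absurd (Finset.mem_univ j0) h
      refine ⟨(List.range m1).map (fun cn : ℕ => (e0, ((cn : ℕ) : ZMod p)))
          ++ L'.map (fun q => (q.1, q.2 + q.1 j0 * ((m1 : ℕ) : ZMod p))), ?_, ?_, ?_⟩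
      · rw [List.length_append, List.length_map, List.length_map, List.length_range]
        omega
      · intro q hq
        rw [List.mem_append] at hq
        rcases hq with hq | hq
        · rw [List.mem_map] at hq
          obtain ⟨cc, hcc, rfl⟩ := hq
          rw [List.mem_range] at hcc
          constructor
          · show e0 ≠ 0
            intro h
            have h1 := congrFun h j0
            rw [Pi.zero_apply, he0, Pi.single_eq_same] at h1
            exact one_ne_zero h1
          · show (∑ j, e0 j * z j) ≠ ((cc : ℕ) : ZMod p)
            rw [hsume0]
            intro h
            have h1 : ((cc : ℕ) : ZMod p).val = m1 := by rw [← h, hm1def]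
            rw [ZMod.val_cast_of_lt (show cc < p by omega)] at h1
            omega
        · rw [List.mem_map] at hq
          obtain ⟨q', hq', rfl⟩ := hq
          obtain ⟨hq1, hq2⟩ := havoid' q' hq'
          refine ⟨hq1, ?_⟩
          have hdiff : (∑ j, q'.1 j * z j)
              = (∑ j, q'.1 j * z' j) + q'.1 j0 * ((m1 : ℕ) : ZMod p) := by
            have hup : (fun j => q'.1 j * z' j)
                = Function.update (fun j => q'.1 j * z j) j0 (q'.1 j0 * 0) := by
              funext j
              by_cases h : j = j0
              · subst h; simp [hz'def]
              · simp [hz'def, Function.update_of_ne h]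
            have h2 : ∑ j, q'.1 j * z' j
                = q'.1 j0 * 0 + ∑ j ∈ Finset.univ \ {j0}, q'.1 j * z j := by
              rw [hup]; exact Finset.sum_update_of_mem (Finset.mem_univ j0) _ _
            have h1 : ∑ j, q'.1 j * z j
                = q'.1 j0 * z j0 + ∑ j ∈ Finset.univ \ {j0}, q'.1 j * z j := by
              have := Finset.sum_update_of_mem (Finset.mem_univ j0) (fun j => q'.1 j * z j)
                (q'.1 j0 * z j0)
              simpa [Function.update_eq_self] using this
            rw [h1, h2, hcastm1]
            ring
          simp only [hdiff]
          intro h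
          exact hq2 (add_right_cancel h)
      · intro y hy hyz
        by_cases hylt : (y j0).val < m1
        · refine ⟨(e0, (((y j0).val : ℕ) : ZMod p)), ?_, ?_⟩
          · exact List.mem_append_left _
              (List.mem_map.mpr ⟨(y j0).val, List.mem_range.mpr hylt, rfl⟩)
          · rw [hsume0, cast_val_eq]
        · push_neg at hylt
          set yh := Function.update y j0 (y j0 - z j0) with hyhdef
          have hvalsub : (y j0 - z j0).val = (y j0).val - m1 := ZMod.val_sub hylt
          have hsyh : ∑ j, (yh j).val = (∑ j, (y j).val) - m1 := by
            have hup : (fun j => (yh j).val)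
                = Function.update (fun j => (y j).val) j0 ((y j0 - z j0).val) := by
              funext j
              by_cases h : j = j0
              · subst h; simp [hyhdef]
              · simp [hyhdef, Function.update_of_ne h]
            have h1 : ∑ j, (yh j).val
                = (y j0 - z j0).val + ∑ j ∈ Finset.univ \ {j0}, (y j).val := by
              rw [hup]; exact Finset.sum_update_of_mem (Finset.mem_univ j0) _ _
            have h2 : ∑ j, (y j).val = (y j0).val + ∑ j ∈ Finset.univ \ {j0}, (y j).val := by
              have := Finset.sum_update_of_mem (Finset.mem_univ j0)
                (fun j => (y j).val) ((y j0).val)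
              simpa [Function.update_eq_self] using this
            omega
          have hyj0sum : (y j0).val ≤ ∑ j, (y j).val :=
            Finset.single_le_sum (f := fun j => (y j).val)
              (fun _ _ => Nat.zero_le _) (Finset.mem_univ j0)
          have hyhz' : yh ≠ z' := by
            intro h
            apply hyz
            funext j
            by_cases hj : j = j0
            · rw [hj]
              have h1 := congrFun h j0
              simp only [hyhdef, hz'def, Function.update_self] at h1
              exact sub_eq_zero.mp h1
            · have h1 := congrFun h j
              simpa [hyhdef, hz'def, Function.update_of_ne hj] using h1
          obtain ⟨q, hqL, hqsum⟩ := hcov' yh (by omega) hyhz'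
          refine ⟨(q.1, q.2 + q.1 j0 * ((m1 : ℕ) : ZMod p)), ?_, ?_⟩
          · exact List.mem_append_right _ (List.mem_map.mpr ⟨q, hqL, rfl⟩)
          · have hdiff : (∑ j, q.1 j * y j)
                = (∑ j, q.1 j * yh j) + q.1 j0 * ((m1 : ℕ) : ZMod p) := by
              have hup : (fun j => q.1 j * yh j)
                  = Function.update (fun j => q.1 j * y j) j0 (q.1 j0 * (y j0 - z j0)) := by
                funext j
                by_cases h : j = j0
                · subst h; simp [hyhdef]
                · simp [hyhdef, Function.update_of_ne h]
              have h2 : ∑ j, q.1 j * yh j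
                  = q.1 j0 * (y j0 - z j0) + ∑ j ∈ Finset.univ \ {j0}, q.1 j * y j := by
                rw [hup]; exact Finset.sum_update_of_mem (Finset.mem_univ j0) _ _
              have h1 : ∑ j, q.1 j * y j
                  = q.1 j0 * y j0 + ∑ j ∈ Finset.univ \ {j0}, q.1 j * y j := by
                have := Finset.sum_update_of_mem (Finset.mem_univ j0)
                  (fun j => q.1 j * y j) (q.1 j0 * y j0)
                simpa [Function.update_eq_self] using this
              rw [h1, h2, hcastm1]
              ring
            rw [hdiff, hqsum]

theorem stmt_15 (p M k : ℕ) [Fact p.Prime] (hM : 1 ≤ M) (hk3 : 3 ≤ k)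
    (hkp : k ≤ p) (hk' : k ≤ M * (p - 1) + 1)
    (s : Finset (Fin M → ZMod p))
    (hs : s = Finset.univ.filter (fun z => ∑ j, (z j).val < k)) :
    ∀ z ∈ s,
      -- the covering by `k - 1` affine hyperplanes avoiding `z`
      (∃ (c : Fin (k - 1) → (Fin M → ZMod p)) (b : Fin (k - 1) → ZMod p),
        (∀ t, c t ≠ 0) ∧
        (∀ y ∈ s, y ≠ z → ∃ t, ∑ j, c t j * y j = b t) ∧
        (∀ t, ∑ j, c t j * z j ≠ b t)) ∧
      -- in particular, `Φ_{k,M}` has Cauchy-Schwarz complexity at most `k - 2` at `z`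
      (∃ C : Fin (k - 1) → Set (Fin (M + 1) → ZMod p),
        (∀ t, C t ⊆ (fun w => Fin.cons (1 : ZMod p) w) '' ((↑s : Set (Fin M → ZMod p)) \ {z})) ∧
        (∀ w ∈ s, w ≠ z → ∃ t, Fin.cons (1 : ZMod p) w ∈ C t) ∧
        (∀ t, Fin.cons (1 : ZMod p) z ∉ Submodule.span (ZMod p) (C t))) := by
  intro z hzs
  have hzS : (∑ j, (z j).val) < k := by
    rw [hs] at hzs
    simpa using hzs
  have hmem : ∀ y : Fin M → ZMod p, y ∈ s ↔ (∑ j, (y j).val) < k := by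
    intro y; rw [hs]; simp
  obtain ⟨L, hlen, havoid, hcov⟩ := cov p M hM k hkp z hzS
  -- pad to Fin (k-1)
  let i0 : Fin M := ⟨0, hM⟩
  let d0 : (Fin M → ZMod p) × ZMod p := (Pi.single i0 1, z i0 + 1)
  have hd0 : d0.1 ≠ 0 ∧ (∑ j, d0.1 j * z j) ≠ d0.2 := by
    constructor
    · intro h
      have h1 := congrFun h i0
      rw [Pi.zero_apply] at h1
      rw [show d0.1 = Pi.single i0 1 from rfl, Pi.single_eq_same] at h1
      exact one_ne_zero h1
    · have h2 : (∑ j, d0.1 j * z j) = z i0 := by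
        rw [Finset.sum_eq_single i0]
        · rw [show d0.1 = Pi.single i0 1 from rfl, Pi.single_eq_same, one_mul]
        · intro j _ hj
          rw [show d0.1 = Pi.single i0 1 from rfl, Pi.single_eq_of_ne hj, zero_mul]
        · intro h; exact absurd (Finset.mem_univ i0) h
      rw [h2]
      intro h3
      have h4 : z i0 = z i0 + 1 := h3
      exact one_ne_zero (left_eq_add.mp h4)
  let c : Fin (k-1) → (Fin M → ZMod p) := fun t => (L.getD t.val d0).1
  let b : Fin (k-1) → ZMod p := fun t => (L.getD t.val d0).2
  have hprop : ∀ t : Fin (k-1), (c t ≠ 0) ∧ (∑ j, c t j * z j) ≠ b t := by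
    intro t
    by_cases h : t.val < L.length
    · have hget : L.getD t.val d0 = L[t.val] := List.getD_eq_getElem L d0 h
      have hmem' : L[t.val] ∈ L := List.getElem_mem h
      have := havoid _ hmem'
      simp only [c, b, hget]
      exact this
    · have hget : L.getD t.val d0 = d0 := List.getD_eq_default L d0 (by omega)
      simp only [c, b, hget]
      exact hd0
  have hcover : ∀ y ∈ s, y ≠ z → ∃ t : Fin (k-1), (∑ j, c t j * y j) = b t := by
    intro y hys hyz
    obtain ⟨q, hqL, hq⟩ := hcov y ((hmem y).mp hys) hyz
    obtain ⟨i, hi, hLi⟩ := List.mem_iff_getElem.mp hqL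
    have hik : i < k - 1 := lt_of_lt_of_le hi hlen
    refine ⟨⟨i, hik⟩, ?_⟩
    have hget : L.getD i d0 = L[i] := List.getD_eq_getElem L d0 hi
    simp only [c, b, hget, hLi]
    exact hq
  refine ⟨⟨c, b, fun t => (hprop t).1, hcover, fun t => (hprop t).2⟩, ?_⟩
  -- complexity part
  refine ⟨fun t => {w | ∃ y, y ∈ s ∧ y ≠ z ∧ (∑ j, c t j * y j) = b t ∧ w = Fin.cons 1 y},
    ?_, ?_, ?_⟩
  · intro t w hw
    obtain ⟨y, hy1, hy2, _, rfl⟩ := hw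
    exact ⟨y, ⟨hy1, hy2⟩, rfl⟩
  · intro w hws hwz
    obtain ⟨t, ht⟩ := hcover w hws hwz
    exact ⟨t, w, hws, hwz, ht, rfl⟩
  · intro t hspan
    -- linear functional F w = ∑ c t j * w j.succ - b t * w 0
    let F : (Fin (M+1) → ZMod p) →ₗ[ZMod p] ZMod p :=
      { toFun := fun w => (∑ j, c t j * w j.succ) - b t * w 0
        map_add' := by
          intro x y
          simp only [Pi.add_apply, mul_add, Finset.sum_add_distrib]
          ring
        map_smul' := by
          intro r x
          simp only [Pi.smul_apply, smul_eq_mul, RingHom.id_apply, mul_sub, Finset.mul_sum]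
          congr 1
          · exact Finset.sum_congr rfl (fun j _ => by ring)
          · ring }
    have hker : ∀ w ∈ {w | ∃ y, y ∈ s ∧ y ≠ z ∧ (∑ j, c t j * y j) = b t ∧ w = Fin.cons 1 y},
        F w = 0 := by
      intro w hw
      obtain ⟨y, _, _, hy3, rfl⟩ := hw
      simp only [F, LinearMap.coe_mk, AddHom.coe_mk]
      simp only [Fin.cons_succ, Fin.cons_zero, mul_one]
      rw [hy3]
      ring
    have hle : Submodule.span (ZMod p)
        {w | ∃ y, y ∈ s ∧ y ≠ z ∧ (∑ j, c t j * y j) = b t ∧ w = Fin.cons 1 y}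
        ≤ LinearMap.ker F := by
      rw [Submodule.span_le]
      intro w hw
      exact LinearMap.mem_ker.mpr (hker w hw)
    have hFz : F (Fin.cons 1 z) ≠ 0 := by
      simp only [F, LinearMap.coe_mk, AddHom.coe_mk, Fin.cons_succ, Fin.cons_zero, mul_one]
      exact sub_ne_zero.mpr (hprop t).2
    exact hFz (LinearMap.mem_ker.mp (hle hspan))
end
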